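/- arXiv:2306.01751 — 7 statements merged into one kernel-verified Lean document; each statement's English description precedes it below -/
import Mathlib

section
/- Let W be a p×k random matrix whose entries are i.i.d. standard normal N(0,1), let β > 0, and define Δ₁ = (β/√k) · max_{1≤i≤p} ‖W_{[i,:]}‖₁, where W_{[i,:]} denotes the i-th row of W and ‖·‖₁ the ℓ₁ norm. Then for any 0 < δ < 1, Pr( Δ₁ ≥ β·√( 2k·log 2 + 2·log(p/δ) ) ) ≤ δ. -/
open MeasureTheory ProbabilityTheory Real

open scoped ENNReal

lemma lintegral_pi_pow {α : Type*} [MeasurableSpace α] (μ : Measure α) [SigmaFinite μ]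
    {g : α → ℝ≥0∞} (hg : Measurable g) :
    ∀ n : ℕ, ∫⁻ x : Fin n → α, ∏ i, g (x i) ∂Measure.pi (fun _ => μ)
      = (∫⁻ x, g x ∂μ) ^ n := by
  intro n
  induction n with
  | zero =>
    simp [Measure.pi_of_empty (fun _ : Fin 0 => μ)]
  | succ n ih =>
    have hmp := (measurePreserving_piFinSuccAbove (fun _ : Fin (n+1) => μ) 0).symm
    rw [← hmp.lintegral_comp_emb (MeasurableEquiv.measurableEmbedding _)]
    have h1 : ∀ y : α × (Fin n → α),
        (∏ i, g (((MeasurableEquiv.piFinSuccAbove (fun _ : Fin (n+1) => α) 0).symm y) i))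
          = g y.1 * ∏ j : Fin n, g (y.2 j) := by
      intro y
      rw [MeasurableEquiv.piFinSuccAbove_symm_apply, Fin.prod_univ_succ]
      simp [Fin.insertNthEquiv, Fin.insertNth_zero, Fin.zero_succAbove]
    simp_rw [h1]
    rw [lintegral_prod_mul (f := g) (g := fun x : Fin n → α => ∏ j, g (x j)) hg.aemeasurable
      (Finset.measurable_prod Finset.univ fun j _ => hg.comp (measurable_pi_apply j)).aemeasurable,
      ih, pow_succ, mul_comm]

lemma lintegral_exp_mul_gaussian (c : ℝ) :
    ∫⁻ x, ENNReal.ofReal (Real.exp (c * x)) ∂(gaussianReal 0 1)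
      = ENNReal.ofReal (Real.exp (c ^ 2 / 2)) := by
  rw [gaussianReal_of_var_ne_zero 0 one_ne_zero,
    lintegral_withDensity_eq_lintegral_mul _ (measurable_gaussianPDF 0 1)
      (g := fun x => ENNReal.ofReal (Real.exp (c * x))) (by fun_prop)]
  have key : ∀ x : ℝ, gaussianPDF 0 1 x * ENNReal.ofReal (Real.exp (c * x))
      = ENNReal.ofReal (Real.exp (c ^ 2 / 2)) * gaussianPDF c 1 x := by
    intro x
    rw [gaussianPDF_def, gaussianPDF_def, ← ENNReal.ofReal_mul (gaussianPDFReal_nonneg 0 1 x),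
      ← ENNReal.ofReal_mul (Real.exp_nonneg _)]
    congr 1
    simp only [gaussianPDFReal]
    rw [mul_assoc, ← Real.exp_add, mul_comm (Real.exp _) ((Real.sqrt _)⁻¹ * _), mul_assoc,
      mul_assoc, ← Real.exp_add]
    congr 2
    push_cast
    ring
  simp_rw [Pi.mul_apply, key]
  rw [lintegral_const_mul _ (measurable_gaussianPDF c 1),
    lintegral_gaussianPDF_eq_one c one_ne_zero, mul_one]

lemma lintegral_exp_mul_abs_gaussian (c : ℝ) :
    ∫⁻ x, ENNReal.ofReal (Real.exp (c * |x|)) ∂(gaussianReal 0 1)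
      ≤ ENNReal.ofReal (2 * Real.exp (c ^ 2 / 2)) := by
  have hle : ∀ x : ℝ, ENNReal.ofReal (Real.exp (c * |x|))
      ≤ ENNReal.ofReal (Real.exp (c * x)) + ENNReal.ofReal (Real.exp (c * (-x))) := by
    intro x
    rw [← ENNReal.ofReal_add (Real.exp_nonneg _) (Real.exp_nonneg _)]
    apply ENNReal.ofReal_le_ofReal
    rcases abs_choice x with h | h <;> rw [h]
    · exact le_add_of_nonneg_right (Real.exp_nonneg _)
    · exact le_add_of_nonneg_left (Real.exp_nonneg _)
  calc ∫⁻ x, ENNReal.ofReal (Real.exp (c * |x|)) ∂(gaussianReal 0 1)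
      ≤ ∫⁻ x, (ENNReal.ofReal (Real.exp (c * x)) + ENNReal.ofReal (Real.exp (c * (-x))))
        ∂(gaussianReal 0 1) := lintegral_mono hle
    _ = ENNReal.ofReal (Real.exp (c ^ 2 / 2)) + ENNReal.ofReal (Real.exp ((-c) ^ 2 / 2)) := by
        rw [lintegral_add_left (by fun_prop)]
        simp_rw [mul_neg, ← neg_mul]
        rw [lintegral_exp_mul_gaussian, lintegral_exp_mul_gaussian]
    _ = ENNReal.ofReal (2 * Real.exp (c ^ 2 / 2)) := by
        rw [neg_pow, ← ENNReal.ofReal_add (Real.exp_nonneg _) (Real.exp_nonneg _)]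
        norm_num
        rw [two_mul]
        rw [ENNReal.ofReal_add (Real.exp_nonneg _) (Real.exp_nonneg _)]

lemma key_real_identity (p k : ℕ) (hp : 0 < p) (hk : 0 < k) (δ : ℝ) (hδ0 : 0 < δ)
    (lam s A : ℝ) (hA : A = 2 * (k : ℝ) * Real.log 2 + 2 * Real.log (p / δ))
    (hls : lam * s = A) (hlam2 : lam ^ 2 = A / k) :
    (2 * Real.exp (lam ^ 2 / 2)) ^ k = Real.exp (lam * s) * (δ / p) := by
  have hk' : (0 : ℝ) < k := Nat.cast_pos.2 hk
  have hp' : (0 : ℝ) < p := Nat.cast_pos.2 hp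
  have hhalf : Real.exp (A / 2) = 2 ^ k * (p / δ) := by
    have : A / 2 = k * Real.log 2 + Real.log (p / δ) := by rw [hA]; ring
    rw [this, Real.exp_add, Real.exp_nat_mul, Real.exp_log two_pos,
      Real.exp_log (by positivity)]
  have hexpA : Real.exp A = (2 ^ k * (p / δ)) ^ 2 := by
    rw [← hhalf, sq, ← Real.exp_add]
    congr 1
    ring
  have h1 : Real.exp (lam ^ 2 / 2) ^ k = Real.exp (A / 2) := by
    rw [← Real.exp_nat_mul, hlam2]
    congr 1
    field_simp
  rw [mul_pow, h1, hls, hhalf, hexpA]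
  field_simp

/-- **Bounding Δ₁.** Let `W` be a `p × k` random matrix with i.i.d. standard normal
entries, and let `Δ₁ = (β/√k) · max_i ‖W_{[i,:]}‖₁`. Then for any `0 < δ < 1`,
`Pr(Δ₁ ≥ β·√(2k·log 2 + 2·log(p/δ))) ≤ δ`. -/
theorem bounding_l1_sensitivity (p k : ℕ) (hp : 0 < p) (hk : 0 < k)
    (β : ℝ) (hβ : 0 < β) (δ : ℝ) (hδ0 : 0 < δ) (hδ1 : δ < 1) :
    (Measure.pi (fun _ : Fin p => Measure.pi (fun _ : Fin k => gaussianReal 0 1)))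
      {W : Fin p → Fin k → ℝ |
        β * Real.sqrt (2 * (k : ℝ) * Real.log 2 + 2 * Real.log (p / δ))
          ≤ (β / Real.sqrt k) * ⨆ i : Fin p, ∑ j : Fin k, |W i j|}
      ≤ ENNReal.ofReal δ := by
  haveI : Nonempty (Fin p) := Fin.pos_iff_nonempty.1 hp
  set γ : Measure ℝ := gaussianReal 0 1 with hγ
  set ρ : Measure (Fin k → ℝ) := Measure.pi (fun _ => γ) with hρ
  set μ : Measure (Fin p → Fin k → ℝ) := Measure.pi (fun _ => ρ) with hμ
  have hk' : (0 : ℝ) < k := Nat.cast_pos.2 hk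
  have hp' : (0 : ℝ) < p := Nat.cast_pos.2 hp
  have hsk : (0 : ℝ) < Real.sqrt k := Real.sqrt_pos.2 hk'
  set A : ℝ := 2 * (k : ℝ) * Real.log 2 + 2 * Real.log (p / δ) with hA
  have hpδ : 1 < (p : ℝ) / δ := by
    rw [lt_div_iff₀ hδ0, one_mul]
    exact hδ1.trans_le (by exact_mod_cast hp)
  have hA0 : 0 < A := by
    have h2 := Real.log_pos one_lt_two
    have h3 := Real.log_pos hpδ
    have h4 : (0:ℝ) ≤ 2 * (k:ℝ) * Real.log 2 := by positivity
    rw [hA]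
    linarith
  set t : ℝ := Real.sqrt A with htdef
  have ht0 : 0 < t := Real.sqrt_pos.2 hA0
  have ht2 : t ^ 2 = A := Real.sq_sqrt hA0.le
  set lam : ℝ := t / Real.sqrt k with hlamdef
  set s : ℝ := Real.sqrt k * t with hsdef
  have hlam0 : 0 < lam := div_pos ht0 hsk
  have hls : lam * s = A := by
    rw [hlamdef, hsdef, ← ht2]
    field_simp
  have hlam2 : lam ^ 2 = A / k := by
    rw [hlamdef, div_pow, ht2, Real.sq_sqrt hk'.le]
  set B : Set (Fin k → ℝ) := {r | s ≤ ∑ j, |r j|} with hB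
  -- step 1: event inclusion
  have hsub : {W : Fin p → Fin k → ℝ |
      β * Real.sqrt (2 * (k : ℝ) * Real.log 2 + 2 * Real.log (p / δ))
        ≤ (β / Real.sqrt k) * ⨆ i : Fin p, ∑ j : Fin k, |W i j|}
      ⊆ ⋃ i : Fin p, Function.eval i ⁻¹' B := by
    intro W hW
    simp only [Set.mem_setOf_eq, ← hA, ← htdef] at hW
    rw [div_mul_eq_mul_div, mul_div_assoc] at hW
    have h1 : t ≤ (⨆ i : Fin p, ∑ j : Fin k, |W i j|) / Real.sqrt k :=
      le_of_mul_le_mul_left hW hβ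
    have h2 : s ≤ ⨆ i : Fin p, ∑ j : Fin k, |W i j| := by
      rw [hsdef, mul_comm]
      exact (le_div_iff₀ hsk).1 h1
    obtain ⟨i, hi⟩ : ∃ i, (∑ j : Fin k, |W i j|) = ⨆ i : Fin p, ∑ j : Fin k, |W i j| :=
      exists_eq_ciSup_of_finite
    exact Set.mem_iUnion.2 ⟨i, by rw [Set.mem_preimage]; exact Set.mem_setOf_eq ▸ (hi ▸ h2 : s ≤ ∑ j : Fin k, |W i j|)⟩
  -- step 2: measure of each preimage
  have hpre : ∀ i : Fin p, μ (Function.eval i ⁻¹' B) = ρ B := by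
    intro i
    have heq : Function.eval i ⁻¹' B
        = Set.pi Set.univ (Function.update (fun _ : Fin p => (Set.univ : Set (Fin k → ℝ))) i B) := by
      ext W
      simp only [Set.mem_preimage, Set.mem_pi, Set.mem_univ, true_implies,
        Function.update_apply, Function.eval]
      constructor
      · intro h j
        split
        · next hji => exact hji ▸ h
        · trivial
      · intro h
        simpa using h i
    rw [heq, hμ, Measure.pi_pi]
    rw [Finset.prod_eq_single i (fun j _ hji => by
        rw [Function.update_of_ne hji]; exact measure_univ)
      (fun h => absurd (Finset.mem_univ i) h)]
    rw [Function.update_self]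
  -- step 3: Chernoff bound for a row
  have hg : Measurable fun x : ℝ => ENNReal.ofReal (Real.exp (lam * |x|)) := by
    fun_prop
  have hfprod : ∀ r : Fin k → ℝ, ENNReal.ofReal (Real.exp (lam * ∑ j, |r j|))
      = ∏ j : Fin k, ENNReal.ofReal (Real.exp (lam * |r j|)) := by
    intro r
    rw [Finset.mul_sum, Real.exp_sum, ENNReal.ofReal_prod_of_nonneg
      (fun _ _ => Real.exp_nonneg _)]
  have hrow : ρ B ≤ ENNReal.ofReal (δ / p) := by
    have hmarkov := mul_meas_ge_le_lintegral₀
      (f := fun r : Fin k → ℝ => ∏ j : Fin k, ENNReal.ofReal (Real.exp (lam * |r j|)))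
      (μ := ρ)
      (Finset.measurable_prod Finset.univ
        (fun j _ => hg.comp (measurable_pi_apply j))).aemeasurable
      (ENNReal.ofReal (Real.exp (lam * s)))
    have hBsub : B ⊆ {r : Fin k → ℝ | ENNReal.ofReal (Real.exp (lam * s))
        ≤ ∏ j : Fin k, ENNReal.ofReal (Real.exp (lam * |r j|))} := by
      intro r hr
      rw [Set.mem_setOf_eq, ← hfprod r]
      exact ENNReal.ofReal_le_ofReal (Real.exp_le_exp.2
        (mul_le_mul_of_nonneg_left hr hlam0.le))
    have hlin : ∫⁻ r : Fin k → ℝ, ∏ j : Fin k, ENNReal.ofReal (Real.exp (lam * |r j|)) ∂ρ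
        = (∫⁻ x, ENNReal.ofReal (Real.exp (lam * |x|)) ∂γ) ^ k :=
      lintegral_pi_pow γ hg k
    have hchain : ENNReal.ofReal (Real.exp (lam * s)) * ρ B
        ≤ ENNReal.ofReal (Real.exp (lam * s)) * ENNReal.ofReal (δ / p) := by
      calc ENNReal.ofReal (Real.exp (lam * s)) * ρ B
          ≤ ENNReal.ofReal (Real.exp (lam * s)) * ρ {r : Fin k → ℝ |
            ENNReal.ofReal (Real.exp (lam * s))
              ≤ ∏ j : Fin k, ENNReal.ofReal (Real.exp (lam * |r j|))} :=
            mul_le_mul_right (measure_mono hBsub) _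
        _ ≤ ∫⁻ r : Fin k → ℝ, ∏ j : Fin k, ENNReal.ofReal (Real.exp (lam * |r j|)) ∂ρ :=
            hmarkov
        _ = (∫⁻ x, ENNReal.ofReal (Real.exp (lam * |x|)) ∂γ) ^ k := hlin
        _ ≤ (ENNReal.ofReal (2 * Real.exp (lam ^ 2 / 2))) ^ k := by
            gcongr
            exact lintegral_exp_mul_abs_gaussian lam
        _ = ENNReal.ofReal ((2 * Real.exp (lam ^ 2 / 2)) ^ k) := by
            rw [ENNReal.ofReal_pow (by positivity)]
        _ = ENNReal.ofReal (Real.exp (lam * s) * (δ / p)) := by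
            rw [key_real_identity p k hp hk δ hδ0 lam s A hA hls hlam2]
        _ = ENNReal.ofReal (Real.exp (lam * s)) * ENNReal.ofReal (δ / p) := by
            rw [ENNReal.ofReal_mul (Real.exp_nonneg _)]
    exact (ENNReal.mul_le_mul_iff_right (by simp [Real.exp_pos]) ENNReal.ofReal_ne_top).1 hchain
  -- step 4: union bound
  calc μ {W : Fin p → Fin k → ℝ |
        β * Real.sqrt (2 * (k : ℝ) * Real.log 2 + 2 * Real.log (p / δ))
          ≤ (β / Real.sqrt k) * ⨆ i : Fin p, ∑ j : Fin k, |W i j|}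
      ≤ μ (⋃ i : Fin p, Function.eval i ⁻¹' B) := measure_mono hsub
    _ ≤ ∑' i : Fin p, μ (Function.eval i ⁻¹' B) := measure_iUnion_le _
    _ = ∑' _ : Fin p, ρ B := by simp_rw [hpre]
    _ ≤ ∑' _ : Fin p, ENNReal.ofReal (δ / p) := ENNReal.tsum_le_tsum (fun _ => hrow)
    _ = (p : ℝ≥0∞) * ENNReal.ofReal (δ / p) := by
        rw [tsum_fintype]
        simp [Finset.sum_const, Finset.card_univ]
    _ = ENNReal.ofReal δ := by
        rw [← ENNReal.ofReal_natCast p, ← ENNReal.ofReal_mul (Nat.cast_nonneg p)]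
        congr 1
        field_simp
end

section
/- Let ε > 0, 0 < δ < 1/2, and Δ > 0, and let σ ≥ Δ·√(2(log(1/δ) + ε))/ε. For z ∈ ℝ^k let μ_z denote the product measure on ℝ^k whose j-th factor is the Gaussian measure N(z_j, σ²). Then for any two vectors x, x′ ∈ ℝ^k with ‖x − x′‖₂ ≤ Δ and every Borel set O ⊆ ℝ^k, μ_x(O) ≤ e^ε · μ_{x′}(O) + δ. -/
open MeasureTheory ProbabilityTheory Real
open scoped ENNReal NNReal

lemma aux_lmarginal_prod {k : ℕ} (g : Fin k → ℝ → ℝ≥0∞) (hg : ∀ j, Measurable (g j))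
    (s : Finset (Fin k)) :
    ∀ x : Fin k → ℝ,
      lmarginal (fun _ => (volume : Measure ℝ)) s (fun y => ∏ j, g j (y j)) x
        = (∏ j ∈ s, ∫⁻ t, g j t) * ∏ j ∈ sᶜ, g j (x j) := by
  have hf : Measurable fun y : Fin k → ℝ => ∏ j, g j (y j) :=
    Finset.measurable_prod _ (fun j _ => (hg j).comp (measurable_pi_apply j))
  induction s using Finset.induction with
  | empty => intro x; simp [Finset.compl_empty]
  | @insert i s hi ih =>
    intro x
    rw [MeasureTheory.lmarginal_insert _ hf hi]
    have hupd : ∀ t : ℝ, ∏ j ∈ sᶜ, g j ((Function.update x i t) j)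
        = g i t * ∏ j ∈ sᶜ.erase i, g j (x j) := by
      intro t
      rw [← Finset.mul_prod_erase _ _ (Finset.mem_compl.mpr hi)]
      rw [Function.update_self]
      congr 1
      refine Finset.prod_congr rfl fun j hj => ?_
      rw [Function.update_of_ne (Finset.ne_of_mem_erase hj)]
    simp_rw [ih, hupd]
    rw [lintegral_const_mul _ ((hg i).mul_const _)]
    rw [lintegral_mul_const _ (hg i)]
    rw [Finset.prod_insert hi, Finset.compl_insert]
    ring

lemma aux_lintegral_pi_prod {k : ℕ} (g : Fin k → ℝ → ℝ≥0∞) (hg : ∀ j, Measurable (g j)) :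
    ∫⁻ y, (∏ j, g j (y j)) ∂(Measure.pi fun _ : Fin k => (volume : Measure ℝ))
      = ∏ j, ∫⁻ t, g j t := by
  rw [MeasureTheory.lintegral_eq_lmarginal_univ (fun _ => (0:ℝ)),
    aux_lmarginal_prod g hg Finset.univ]
  simp

lemma aux_pi_gauss {k : ℕ} (m : Fin k → ℝ) (v : ℝ≥0) (hv : v ≠ 0) :
    Measure.pi (fun j : Fin k => gaussianReal (m j) v)
      = (Measure.pi fun _ : Fin k => (volume : Measure ℝ)).withDensity
          (fun y => ∏ j, gaussianPDF (m j) v (y j)) := by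
  refine Measure.pi_eq fun s hs => ?_
  rw [withDensity_apply _ (MeasurableSet.univ_pi hs)]
  have h1 : ∫⁻ y in Set.pi Set.univ s, (∏ j, gaussianPDF (m j) v (y j))
        ∂(Measure.pi fun _ : Fin k => (volume : Measure ℝ))
      = ∫⁻ y, (∏ j, (s j).indicator (gaussianPDF (m j) v) (y j))
        ∂(Measure.pi fun _ : Fin k => (volume : Measure ℝ)) := by
    rw [← lintegral_indicator (MeasurableSet.univ_pi hs)]
    congr 1
    ext y
    by_cases hy : y ∈ Set.pi Set.univ s
    · rw [Set.indicator_of_mem hy]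
      exact Finset.prod_congr rfl fun j _ =>
        (Set.indicator_of_mem (hy j (Set.mem_univ j)) _).symm
    · rw [Set.indicator_of_notMem hy]
      obtain ⟨j, -, hj⟩ : ∃ j, j ∈ Set.univ ∧ y j ∉ s j := by
        simpa [Set.mem_pi] using hy
      exact (Finset.prod_eq_zero (Finset.mem_univ j)
        (Set.indicator_of_notMem hj _)).symm
  rw [h1, aux_lintegral_pi_prod _ (fun j => (measurable_gaussianPDF (m j) v).indicator (hs j))]
  exact Finset.prod_congr rfl fun j _ => by
    rw [lintegral_indicator (hs j), gaussianReal_apply _ hv]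

lemma aux_prod_pdf_ratio {k : ℕ} {σ : ℝ} (hσ : 0 < σ) (m m' : Fin k → ℝ) (y : Fin k → ℝ) :
    ∏ j, gaussianPDFReal (m j) ⟨σ ^ 2, sq_nonneg σ⟩ (y j)
      = Real.exp ((∑ j, ((y j - m' j) ^ 2 - (y j - m j) ^ 2)) / (2 * σ ^ 2))
        * ∏ j, gaussianPDFReal (m' j) ⟨σ ^ 2, sq_nonneg σ⟩ (y j) := by
  have hσ2 : (σ:ℝ) ^ 2 ≠ 0 := by positivity
  simp only [gaussianPDFReal]
  rw [Finset.prod_mul_distrib, Finset.prod_mul_distrib, ← Real.exp_sum, ← Real.exp_sum]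
  rw [mul_left_comm]
  congr 1
  rw [← Real.exp_add]
  congr 1
  rw [Finset.sum_div, ← Finset.sum_add_distrib]
  refine Finset.sum_congr rfl fun j _ => ?_
  change -(y j - m j) ^ 2 / (2 * σ ^ 2)
    = ((y j - m' j) ^ 2 - (y j - m j) ^ 2) / (2 * σ ^ 2) + -(y j - m' j) ^ 2 / (2 * σ ^ 2)
  field_simp
  ring

lemma aux_compare {k : ℕ} {σ : ℝ} (hσ : 0 < σ) (m m' : Fin k → ℝ) (r : ℝ)
    {S : Set (Fin k → ℝ)} (hS : MeasurableSet S)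
    (hpt : ∀ y ∈ S, (∑ j, ((y j - m' j) ^ 2 - (y j - m j) ^ 2)) ≤ 2 * σ ^ 2 * r) :
    Measure.pi (fun j : Fin k => gaussianReal (m j) ⟨σ ^ 2, sq_nonneg σ⟩) S
      ≤ ENNReal.ofReal (Real.exp r)
        * Measure.pi (fun j : Fin k => gaussianReal (m' j) ⟨σ ^ 2, sq_nonneg σ⟩) S := by
  have hv : (⟨σ ^ 2, sq_nonneg σ⟩ : ℝ≥0) ≠ 0 := by
    intro h
    have : σ ^ 2 = 0 := congrArg NNReal.toReal h
    exact absurd this (by positivity)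
  rw [aux_pi_gauss m _ hv, aux_pi_gauss m' _ hv,
    withDensity_apply _ hS, withDensity_apply _ hS]
  have hmeas' : Measurable fun y : Fin k → ℝ =>
      ∏ j, gaussianPDF (m' j) (⟨σ ^ 2, sq_nonneg σ⟩ : ℝ≥0) (y j) :=
    Finset.measurable_prod _
      (fun j _ => (measurable_gaussianPDF (m' j) _).comp (measurable_pi_apply j))
  rw [← lintegral_const_mul (ENNReal.ofReal (Real.exp r)) hmeas']
  refine setLIntegral_mono (hmeas'.const_mul _) fun y hy => ?_
  have h1 : ∀ (mm : Fin k → ℝ), (∏ j, gaussianPDF (mm j) (⟨σ ^ 2, sq_nonneg σ⟩ : ℝ≥0) (y j))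
      = ENNReal.ofReal (∏ j, gaussianPDFReal (mm j) ⟨σ ^ 2, sq_nonneg σ⟩ (y j)) := by
    intro mm
    simp only [gaussianPDF]
    exact (ENNReal.ofReal_prod_of_nonneg (fun j _ => gaussianPDFReal_nonneg _ _ _)).symm
  rw [h1, h1, ← ENNReal.ofReal_mul (Real.exp_nonneg r)]
  refine ENNReal.ofReal_le_ofReal ?_
  rw [aux_prod_pdf_ratio hσ m m' y]
  refine mul_le_mul_of_nonneg_right ?_
    (Finset.prod_nonneg fun j _ => gaussianPDFReal_nonneg _ _ _)
  rw [Real.exp_le_exp]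
  rw [div_le_iff₀ (by positivity : (0:ℝ) < 2 * σ ^ 2)]
  calc (∑ j, ((y j - m' j) ^ 2 - (y j - m j) ^ 2)) ≤ 2 * σ ^ 2 * r := hpt y hy
    _ = r * (2 * σ ^ 2) := by ring

set_option maxHeartbeats 2000000 in
/-- **Gaussian mechanism.** Let `ε > 0`, `0 < δ < 1/2`, `Δ > 0`, and
`σ ≥ Δ·√(2(log(1/δ) + ε))/ε`. For `z ∈ ℝᵏ` let `μ_z` be the product of Gaussians
`N(z_j, σ²)`. Then for any `x, x'` with `‖x − x'‖₂ ≤ Δ` and every Borel set `O`,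
`μ_x(O) ≤ e^ε · μ_{x'}(O) + δ`. -/
theorem gaussian_mechanism (k : ℕ) (hk : 0 < k) (ε δ Δ σ : ℝ)
    (hε : 0 < ε) (hδ0 : 0 < δ) (hδ1 : δ < 1 / 2) (hΔ : 0 < Δ)
    (hσ : σ ≥ Δ * Real.sqrt (2 * (Real.log (1 / δ) + ε)) / ε)
    (x x' : Fin k → ℝ)
    (hadj : Real.sqrt (∑ j : Fin k, (x j - x' j) ^ 2) ≤ Δ)
    (O : Set (Fin k → ℝ)) (hO : MeasurableSet O) :
    (Measure.pi (fun j : Fin k => gaussianReal (x j) ⟨σ ^ 2, sq_nonneg σ⟩)) O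
      ≤ ENNReal.ofReal (Real.exp ε)
          * (Measure.pi (fun j : Fin k => gaussianReal (x' j) ⟨σ ^ 2, sq_nonneg σ⟩)) O
        + ENNReal.ofReal δ := by
  set Lg : ℝ := Real.log (1 / δ) with hLgdef
  clear_value Lg
  have hLg : 0 < Lg := by
    rw [hLgdef]
    exact Real.log_pos (by rw [lt_div_iff₀ hδ0]; linarith)
  have hσ0 : 0 < σ :=
    lt_of_lt_of_le (by positivity : (0:ℝ) < Δ * Real.sqrt (2 * (Lg + ε)) / ε) hσ
  -- trivial case x = x'
  by_cases hxx : x = x'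
  · subst hxx
    calc (Measure.pi (fun j : Fin k => gaussianReal (x j) ⟨σ ^ 2, sq_nonneg σ⟩)) O
        = 1 * (Measure.pi (fun j : Fin k => gaussianReal (x j) ⟨σ ^ 2, sq_nonneg σ⟩)) O :=
          (one_mul _).symm
      _ ≤ ENNReal.ofReal (Real.exp ε)
          * (Measure.pi (fun j : Fin k => gaussianReal (x j) ⟨σ ^ 2, sq_nonneg σ⟩)) O :=
          mul_le_mul_left (ENNReal.one_le_ofReal.mpr (Real.one_le_exp hε.le)) _
      _ ≤ _ := le_self_add
  -- main case
  set n2 : ℝ := ∑ j : Fin k, (x j - x' j) ^ 2 with hn2def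
  clear_value n2
  have hn2nonneg : 0 ≤ n2 := by
    rw [hn2def]; exact Finset.sum_nonneg fun j _ => sq_nonneg _
  have hn2 : 0 < n2 := by
    rw [hn2def]
    obtain ⟨j, hj⟩ := Function.ne_iff.mp hxx
    exact Finset.sum_pos' (fun j _ => sq_nonneg _)
      ⟨j, Finset.mem_univ j, lt_of_le_of_ne (sq_nonneg _)
        (Ne.symm (pow_ne_zero 2 (sub_ne_zero.mpr hj)))⟩
  have hn2Δ : n2 ≤ Δ ^ 2 := by
    have := pow_le_pow_left₀ (Real.sqrt_nonneg n2) hadj 2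
    rwa [Real.sq_sqrt hn2nonneg] at this
  -- from the hypothesis on σ
  have hσε : 2 * Δ ^ 2 * (Lg + ε) ≤ σ ^ 2 * ε ^ 2 := by
    have hsq : (Δ * Real.sqrt (2 * (Lg + ε)) / ε) ^ 2 ≤ σ ^ 2 :=
      pow_le_pow_left₀ (by positivity) hσ 2
    rw [div_pow, mul_pow, Real.sq_sqrt (by positivity)] at hsq
    rw [div_le_iff₀ (by positivity : (0:ℝ) < ε ^ 2)] at hsq
    nlinarith
  set T : ℝ := σ ^ 2 * ε - n2 / 2 with hTdef
  clear_value T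
  have hT : 0 < T := by
    have h1 : 2 * Δ ^ 2 * ε ≤ σ ^ 2 * ε ^ 2 := by nlinarith
    have h2 : 2 * Δ ^ 2 ≤ σ ^ 2 * ε := by nlinarith
    rw [hTdef]
    linarith
  have hnum : Lg * (2 * σ ^ 2 * n2) ≤ (σ ^ 2 * ε - n2 / 2) ^ 2 := by
    nlinarith [mul_le_mul_of_nonneg_left hn2Δ (by positivity : (0:ℝ) ≤ 2 * σ ^ 2 * (Lg + ε)),
      mul_le_mul_of_nonneg_left hσε (by positivity : (0:ℝ) ≤ σ ^ 2),
      mul_pos (mul_pos (pow_pos hσ0 2) hn2) hε, sq_nonneg n2]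
  -- the bad event
  set A : Set (Fin k → ℝ) :=
    {y | 2 * σ ^ 2 * ε < ∑ j : Fin k, ((y j - x' j) ^ 2 - (y j - x j) ^ 2)} with hAdef
  have hA : MeasurableSet A := by
    have hmeas : Measurable fun y : Fin k → ℝ =>
        ∑ j : Fin k, ((y j - x' j) ^ 2 - (y j - x j) ^ 2) :=
      Finset.measurable_sum _ fun j _ =>
        (((measurable_pi_apply j).sub measurable_const).pow_const 2).sub
          (((measurable_pi_apply j).sub measurable_const).pow_const 2)
    exact measurableSet_lt measurable_const hmeas
  -- bound on O \ A
  have hbound1 : (Measure.pi (fun j : Fin k => gaussianReal (x j) ⟨σ ^ 2, sq_nonneg σ⟩)) (O \ A)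
      ≤ ENNReal.ofReal (Real.exp ε)
        * (Measure.pi (fun j : Fin k => gaussianReal (x' j) ⟨σ ^ 2, sq_nonneg σ⟩)) O := by
    refine le_trans (aux_compare hσ0 x x' ε (hO.diff hA) fun y hy => not_lt.mp hy.2) ?_
    exact mul_le_mul_right (measure_mono Set.diff_subset) _
  -- bound on A via the shifted mean z
  set lam : ℝ := T / n2 with hlamdef
  clear_value lam
  set z : Fin k → ℝ := fun j => x j + lam * (x j - x' j) with hzdef
  set r : ℝ := -(T ^ 2 / (2 * σ ^ 2 * n2)) with hrdef
  clear_value r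
  have h2σr : 2 * σ ^ 2 * r = -(T ^ 2 / n2) := by
    rw [hrdef]
    field_simp
  have hbound2 : (Measure.pi (fun j : Fin k => gaussianReal (x j) ⟨σ ^ 2, sq_nonneg σ⟩)) A
      ≤ ENNReal.ofReal δ := by
    have hcmp := aux_compare hσ0 x z r hA (fun y hy => by
      have hyA : 2 * σ ^ 2 * ε < ∑ j : Fin k, ((y j - x' j) ^ 2 - (y j - x j) ^ 2) := hy
      have hexp : ∑ j : Fin k, ((y j - x' j) ^ 2 - (y j - x j) ^ 2)
          = 2 * (∑ j : Fin k, (x j - x' j) * (y j - x j)) + n2 := by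
        rw [hn2def, Finset.mul_sum, ← Finset.sum_add_distrib]
        exact Finset.sum_congr rfl fun j _ => by ring
      have hS : T < ∑ j : Fin k, (x j - x' j) * (y j - x j) := by
        rw [hexp] at hyA
        rw [hTdef]
        linarith
      have hexp2 : ∑ j : Fin k, ((y j - z j) ^ 2 - (y j - x j) ^ 2)
          = lam ^ 2 * n2 - 2 * lam * ∑ j : Fin k, (x j - x' j) * (y j - x j) := by
        rw [hn2def, Finset.mul_sum, Finset.mul_sum, ← Finset.sum_sub_distrib]
        refine Finset.sum_congr rfl fun j _ => ?_
        simp only [hzdef]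
        ring
      rw [hexp2, h2σr]
      have e1 : lam ^ 2 * n2 - 2 * lam * ∑ j : Fin k, (x j - x' j) * (y j - x j)
          = (T ^ 2 - 2 * T * ∑ j : Fin k, (x j - x' j) * (y j - x j)) / n2 := by
        rw [hlamdef]
        field_simp
      rw [e1, neg_div' , div_le_div_iff_of_pos_right hn2]
      nlinarith)
    have hz1 : (Measure.pi (fun j : Fin k => gaussianReal (z j) ⟨σ ^ 2, sq_nonneg σ⟩)) A ≤ 1 := by
      have : ∀ j, IsProbabilityMeasure (gaussianReal (z j) ⟨σ ^ 2, sq_nonneg σ⟩) :=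
        fun j => instIsProbabilityMeasureGaussianReal (z j) _
      exact prob_le_one
    have hexpδ : Real.exp r ≤ δ := by
      rw [← Real.exp_log hδ0, Real.exp_le_exp, hrdef]
      have hlogδ : Real.log δ = -Lg := by
        rw [hLgdef, one_div, Real.log_inv, neg_neg]
      rw [hlogδ, neg_le_neg_iff, le_div_iff₀ (by positivity : (0:ℝ) < 2 * σ ^ 2 * n2)]
      rw [hTdef]
      exact hnum
    calc (Measure.pi (fun j : Fin k => gaussianReal (x j) ⟨σ ^ 2, sq_nonneg σ⟩)) A
        ≤ ENNReal.ofReal (Real.exp r)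
          * (Measure.pi (fun j : Fin k => gaussianReal (z j) ⟨σ ^ 2, sq_nonneg σ⟩)) A := hcmp
      _ ≤ ENNReal.ofReal (Real.exp r) * 1 := mul_le_mul_right hz1 _
      _ = ENNReal.ofReal (Real.exp r) := mul_one _
      _ ≤ ENNReal.ofReal δ := ENNReal.ofReal_le_ofReal hexpδ
  -- assemble
  have hsplit : (Measure.pi (fun j : Fin k => gaussianReal (x j) ⟨σ ^ 2, sq_nonneg σ⟩)) O
      = (Measure.pi (fun j : Fin k => gaussianReal (x j) ⟨σ ^ 2, sq_nonneg σ⟩)) (O ∩ A)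
        + (Measure.pi (fun j : Fin k => gaussianReal (x j) ⟨σ ^ 2, sq_nonneg σ⟩)) (O \ A) :=
    (measure_inter_add_diff O hA).symm
  rw [hsplit, add_comm]
  refine add_le_add hbound1 ?_
  exact le_trans (measure_mono Set.inter_subset_right) hbound2
end

section
/- Let Z₁, Z₂ be independent standard normal random variables, let σ_x, σ_y > 0 and ρ ∈ (−1,1), and set X = σ_x·Z₁ and Y = σ_y·(ρ·Z₁ + √(1−ρ²)·Z₂), so that (X,Y) is centered bivariate normal with variances σ_x², σ_y² and correlation ρ. With r = σ_x/σ_y, it holds that Pr(|X| > |Y|) = (1/π)·[ arctan( (r − ρ)/√(1−ρ²) ) + arctan( (r + ρ)/√(1−ρ²) ) ]. -/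
open MeasureTheory ProbabilityTheory Real

open Set

section BivariateNormalAux

lemma bvn_gauss_prod_eq :
    (gaussianReal 0 1).prod (gaussianReal 0 1)
      = (volume : Measure (ℝ × ℝ)).withDensity
          (fun p => gaussianPDF 0 1 p.1 * gaussianPDF 0 1 p.2) := by
  rw [MeasureTheory.Measure.volume_eq_prod]
  refine Measure.prod_eq fun s t hs ht => ?_
  rw [withDensity_apply _ (hs.prod ht), ← Measure.prod_restrict,
    lintegral_prod_mul (measurable_gaussianPDF 0 1).aemeasurable
      (measurable_gaussianPDF 0 1).aemeasurable,
    gaussianReal_apply _ one_ne_zero, gaussianReal_apply _ one_ne_zero]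

lemma bvn_radial_integral_eq_one :
    ∫ x in Ioi (0:ℝ), x * rexp (-x ^ 2 / 2) = 1 := by
  have hderiv : ∀ x ∈ Ioi (0:ℝ), HasDerivAt (fun y => -rexp (-y ^ 2 / 2))
      (x * rexp (-x ^ 2 / 2)) x := by
    intro x _
    have h1 : HasDerivAt (fun y : ℝ => -y ^ 2 / 2) (-x) x := by
      have := ((hasDerivAt_pow 2 x).neg).div_const 2
      refine this.congr_deriv ?_
      push_cast; ring
    have h2 := (h1.exp).neg
    refine h2.congr_deriv ?_
    ring
  have hint : IntegrableOn (fun x : ℝ => x * rexp (-x ^ 2 / 2)) (Ioi 0) := by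
    have : (fun x : ℝ => x * rexp (-x ^ 2 / 2))
        = fun x : ℝ => x * rexp (-(1/2) * x ^ 2) := by
      ext x; congr 1; ring
    rw [this]
    exact (integrable_mul_exp_neg_mul_sq (by norm_num)).integrableOn
  have htend : Filter.Tendsto (fun y : ℝ => -rexp (-y ^ 2 / 2)) Filter.atTop (nhds 0) := by
    have h : Filter.Tendsto (fun y : ℝ => y ^ 2 / 2) Filter.atTop Filter.atTop :=
      (Filter.tendsto_pow_atTop (two_ne_zero)).atTop_div_const (by norm_num)
    have hg : Filter.Tendsto (fun y : ℝ => -y ^ 2 / 2) Filter.atTop Filter.atBot := by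
      simpa [Function.comp_def, neg_div] using Filter.tendsto_neg_atTop_atBot.comp h
    simpa using (Real.tendsto_exp_atBot.comp hg).neg
  have hcont : ContinuousWithinAt (fun y : ℝ => -rexp (-y ^ 2 / 2)) (Ici 0) 0 := by
    apply Continuous.continuousWithinAt
    continuity
  have := integral_Ioi_of_hasDerivAt_of_tendsto hcont hderiv hint htend
  simpa using this

lemma bvn_angle_set_inter {σx σy ρ : ℝ} (hσx : 0 < σx) (hσy : 0 < σy)
    (hρ : ρ ∈ Set.Ioo (-1:ℝ) 1) :
    {θ : ℝ | |σy * (ρ * cos θ + Real.sqrt (1 - ρ ^ 2) * sin θ)| < σx * |cos θ|}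
      ∩ Ioo (-(π/2)) (π/2)
    = Ioo (-arctan ((σx / σy + ρ) / Real.sqrt (1 - ρ ^ 2)))
        (arctan ((σx / σy - ρ) / Real.sqrt (1 - ρ ^ 2))) := by
  set a := Real.sqrt (1 - ρ ^ 2) with ha_def
  have ha : 0 < a := Real.sqrt_pos.2 (by nlinarith [hρ.1, hρ.2])
  set α := (σx / σy - ρ) / a with hα_def
  set β := (σx / σy + ρ) / a with hβ_def
  have key : ∀ θ : ℝ, θ ∈ Ioo (-(π/2)) (π/2) →
      ((|σy * (ρ * cos θ + a * sin θ)| < σx * |cos θ|) ↔ (-arctan β < θ ∧ θ < arctan α)) := by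
    intro θ hθ
    have hc : 0 < cos θ := Real.cos_pos_of_mem_Ioo hθ
    have htan_iff : ∀ x : ℝ, (x < tan θ ↔ arctan x < θ) := by
      intro x
      constructor
      · intro h
        by_contra hle
        push_neg at hle
        have := Real.strictMonoOn_tan.monotoneOn hθ (Real.arctan_mem_Ioo x) hle
        rw [Real.tan_arctan] at this
        linarith
      · intro h
        have := Real.strictMonoOn_tan (Real.arctan_mem_Ioo x) hθ h
        rwa [Real.tan_arctan] at this
    have htan_iff' : ∀ x : ℝ, (tan θ < x ↔ θ < arctan x) := by
      intro x
      constructor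
      · intro h
        by_contra hle
        push_neg at hle
        have := Real.strictMonoOn_tan.monotoneOn (Real.arctan_mem_Ioo x) hθ hle
        rw [Real.tan_arctan] at this
        linarith
      · intro h
        have := Real.strictMonoOn_tan hθ (Real.arctan_mem_Ioo x) h
        rwa [Real.tan_arctan] at this
    have hrw : ρ * cos θ + a * sin θ = cos θ * (ρ + a * tan θ) := by
      rw [Real.tan_eq_sin_div_cos]
      field_simp
    rw [hrw, abs_of_pos hc, abs_mul, abs_of_pos hσy, abs_mul, abs_of_pos hc]
    have h1 : σy * (cos θ * |ρ + a * tan θ|) < σx * cos θ ↔ |ρ + a * tan θ| < σx / σy := by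
      rw [lt_div_iff₀ hσy]
      constructor
      · intro h; nlinarith [abs_nonneg (ρ + a * tan θ)]
      · intro h; nlinarith [abs_nonneg (ρ + a * tan θ)]
    have e1 : (-arctan β < θ) ↔ (-(σx/σy) < ρ + a * tan θ) := by
      rw [← Real.arctan_neg, ← htan_iff (-β), hβ_def, ← neg_div, div_lt_iff₀ ha, mul_comm]
      constructor <;> intro <;> linarith
    have e2 : (θ < arctan α) ↔ (ρ + a * tan θ < σx/σy) := by
      rw [← htan_iff' α, hα_def, lt_div_iff₀ ha, mul_comm]
      constructor <;> intro <;> linarith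
    rw [h1, abs_lt]
    exact and_congr e1.symm e2.symm
  ext θ
  simp only [mem_inter_iff, mem_setOf_eq, mem_Ioo]
  constructor
  · rintro ⟨hC, h1, h2⟩
    exact (key θ ⟨h1, h2⟩).mp hC
  · intro h
    have hθ : θ ∈ Ioo (-(π/2)) (π/2) := by
      constructor
      · have := Real.arctan_lt_pi_div_two β; linarith [h.1]
      · have := Real.arctan_lt_pi_div_two α; linarith [h.2]
    exact ⟨(key θ hθ).mpr h, hθ.1, hθ.2⟩

lemma bvn_angle_set_periodic {σx σy ρ a : ℝ} (θ : ℝ) :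
    (|σy * (ρ * cos (θ + π) + a * sin (θ + π))| < σx * |cos (θ + π)|)
      ↔ (|σy * (ρ * cos θ + a * sin θ)| < σx * |cos θ|) := by
  rw [Real.cos_add_pi, Real.sin_add_pi]
  rw [show σy * (ρ * -cos θ + a * -sin θ) = -(σy * (ρ * cos θ + a * sin θ)) by ring,
    abs_neg, abs_neg]

lemma bvn_indicator_shift (A : Set ℝ) (g : ℝ → ℝ) (u v c : ℝ)
    (hper : ∀ x, g (x + c) = g x) :
    ∫ x in Ioc u v, g x = ∫ x in Ioc (u - c) (v - c), g x := by
  rw [← integral_indicator measurableSet_Ioc, ← integral_indicator measurableSet_Ioc]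
  rw [← MeasureTheory.integral_add_right_eq_self (fun x => (Ioc u v).indicator g x) c]
  congr 1
  ext x
  by_cases h : x ∈ Ioc (u - c) (v - c)
  · have h' : x + c ∈ Ioc u v := by
      obtain ⟨h1, h2⟩ := h
      exact ⟨by linarith, by linarith⟩
    rw [indicator_of_mem h', indicator_of_mem h, hper]
  · have h' : x + c ∉ Ioc u v := by
      simp only [mem_Ioc, not_and_or, not_lt, not_le] at h ⊢
      rcases h with h | h
      · left; linarith
      · right; linarith
    rw [indicator_of_notMem h', indicator_of_notMem h]

lemma bvn_J_split (A : Set ℝ) (hA : MeasurableSet A)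
    (hper : ∀ x : ℝ, x + π ∈ A ↔ x ∈ A) :
    ∫ θ in Ioo (-π) π, A.indicator (fun _ => (1:ℝ)) θ
      = 2 * ∫ θ in Ioc (-(π/2)) (π/2), A.indicator (fun _ => (1:ℝ)) θ := by
  set g : ℝ → ℝ := A.indicator (fun _ => (1:ℝ)) with hg
  have hgper : ∀ x : ℝ, g (x + π) = g x := by
    intro x
    by_cases h : x ∈ A
    · rw [hg, indicator_of_mem ((hper x).mpr h), indicator_of_mem h]
    · rw [hg, indicator_of_notMem (fun hc => h ((hper x).mp hc)),
        indicator_of_notMem h]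
  have hgint : ∀ u v : ℝ, IntegrableOn g (Ioc u v) := fun u v =>
    (integrableOn_const measure_Ioc_lt_top.ne).indicator hA
  have hπ : 0 < π := Real.pi_pos
  have s1 : ∫ θ in Ioo (-π) π, g θ = ∫ θ in Ioc (-π) π, g θ :=
    (integral_Ioc_eq_integral_Ioo).symm
  have s2 : ∫ θ in Ioc (-π) π, g θ
      = (∫ θ in Ioc (-π) (-(π/2)), g θ) + ∫ θ in Ioc (-(π/2)) π, g θ := by
    rw [← setIntegral_union (Ioc_disjoint_Ioc_of_le le_rfl) measurableSet_Ioc (hgint _ _) (hgint _ _),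
      Ioc_union_Ioc_eq_Ioc (by linarith) (by linarith)]
  have s3 : ∫ θ in Ioc (-(π/2)) π, g θ
      = (∫ θ in Ioc (-(π/2)) (π/2), g θ) + ∫ θ in Ioc (π/2) π, g θ := by
    rw [← setIntegral_union (Ioc_disjoint_Ioc_of_le le_rfl) measurableSet_Ioc (hgint _ _) (hgint _ _),
      Ioc_union_Ioc_eq_Ioc (by linarith) (by linarith)]
  have t1 : ∫ θ in Ioc (π/2) π, g θ = ∫ θ in Ioc (-(π/2)) 0, g θ := by
    rw [bvn_indicator_shift A g (π/2) π π hgper,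
      show π/2 - π = -(π/2) by ring, show π - π = (0:ℝ) by ring]
  have t2 : ∫ θ in Ioc (-π) (-(π/2)), g θ = ∫ θ in Ioc 0 (π/2), g θ := by
    have hgper' : ∀ x : ℝ, g (x + (-π)) = g x := by
      intro x
      rw [← hgper (x + -π)]
      norm_num
    rw [bvn_indicator_shift A g (-π) (-(π/2)) (-π) hgper',
      show -π - (-π) = (0:ℝ) by ring, show -(π/2) - (-π) = π/2 by ring]
  have s4 : (∫ θ in Ioc (-(π/2)) 0, g θ) + ∫ θ in Ioc 0 (π/2), g θ
      = ∫ θ in Ioc (-(π/2)) (π/2), g θ := by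
    rw [← setIntegral_union (Ioc_disjoint_Ioc_of_le le_rfl) measurableSet_Ioc (hgint _ _) (hgint _ _),
      Ioc_union_Ioc_eq_Ioc (by linarith) (by linarith)]
  rw [s1, s2, s3, t1, t2]
  linarith [s4]

end BivariateNormalAux

/-- For a centered bivariate normal pair `(X, Y)` with variances `σ_x², σ_y²` and
correlation `ρ ∈ (−1,1)`, realized as `X = σ_x·Z₁`, `Y = σ_y·(ρZ₁ + √(1−ρ²)Z₂)` for
independent standard normals `Z₁, Z₂`, with `r = σ_x/σ_y`:
`Pr(|X| > |Y|) = (1/π)·[arctan((r−ρ)/√(1−ρ²)) + arctan((r+ρ)/√(1−ρ²))]`. -/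
theorem bivariate_normal_abs_gt_prob (σx σy ρ : ℝ) (hσx : 0 < σx) (hσy : 0 < σy)
    (hρ : ρ ∈ Set.Ioo (-1 : ℝ) 1) :
    (Measure.prod (gaussianReal 0 1) (gaussianReal 0 1))
      {z : ℝ × ℝ |
        |σy * (ρ * z.1 + Real.sqrt (1 - ρ ^ 2) * z.2)| < |σx * z.1|}
      = ENNReal.ofReal ((1 / π)
          * (Real.arctan ((σx / σy - ρ) / Real.sqrt (1 - ρ ^ 2))
              + Real.arctan ((σx / σy + ρ) / Real.sqrt (1 - ρ ^ 2)))) := by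
  set a := Real.sqrt (1 - ρ ^ 2) with ha_def
  have ha : 0 < a := Real.sqrt_pos.2 (by nlinarith [hρ.1, hρ.2])
  set S : Set (ℝ × ℝ) := {z : ℝ × ℝ | |σy * (ρ * z.1 + a * z.2)| < |σx * z.1|} with hS_def
  set A : Set ℝ := {θ : ℝ | |σy * (ρ * cos θ + a * sin θ)| < σx * |cos θ|} with hA_def
  have hS : MeasurableSet S := by
    apply measurableSet_lt <;> fun_prop
  have hA : MeasurableSet A := by
    apply measurableSet_lt <;> fun_prop
  have hper : ∀ x : ℝ, x + π ∈ A ↔ x ∈ A := by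
    intro x
    simp only [hA_def, mem_setOf_eq]
    exact bvn_angle_set_periodic x
  set f : ℝ × ℝ → ℝ := fun p => gaussianPDFReal 0 1 p.1 * gaussianPDFReal 0 1 p.2 with hf_def
  have hfint : IntegrableOn f S := by
    have : Integrable f volume := by
      rw [MeasureTheory.Measure.volume_eq_prod]
      exact (integrable_gaussianPDFReal 0 1).mul_prod (integrable_gaussianPDFReal 0 1)
    exact this.integrableOn
  have step1 : (gaussianReal 0 1).prod (gaussianReal 0 1) S
      = ENNReal.ofReal (∫ p in S, f p) := by
    rw [bvn_gauss_prod_eq, withDensity_apply _ hS]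
    rw [ofReal_integral_eq_lintegral_ofReal hfint
      (ae_of_all _ fun p => mul_nonneg (gaussianPDFReal_nonneg 0 1 _)
        (gaussianPDFReal_nonneg 0 1 _))]
    apply lintegral_congr
    intro p
    rw [hf_def, ENNReal.ofReal_mul (gaussianPDFReal_nonneg 0 1 _)]
    rfl
  have step2 : ∫ p in S, f p
      = (∫ x in Ioi (0:ℝ), x * rexp (-x ^ 2 / 2))
          * ∫ θ in Ioo (-π) π, (2*π)⁻¹ * A.indicator (fun _ => (1:ℝ)) θ := by
    have e : ∫ p in polarCoord.target, p.1 • S.indicator f (polarCoord.symm p)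
        = ∫ p in (Ioi (0:ℝ) ×ˢ Ioo (-π) π),
            (fun x : ℝ => x * rexp (-x ^ 2 / 2)) p.1
              * ((fun θ : ℝ => (2*π)⁻¹ * A.indicator (fun _ => (1:ℝ)) θ) p.2) := by
      apply setIntegral_congr_fun (measurableSet_Ioi.prod measurableSet_Ioo)
      intro p hp
      obtain ⟨hr, hθ⟩ := hp
      simp only [mem_Ioi] at hr
      have hsymm : polarCoord.symm p = (p.1 * cos p.2, p.1 * sin p.2) := rfl
      have hmem : polarCoord.symm p ∈ S ↔ p.2 ∈ A := by
        rw [hsymm, hS_def, hA_def]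
        simp only [mem_setOf_eq]
        have lhs_eq : |σy * (ρ * (p.1 * cos p.2) + a * (p.1 * sin p.2))|
            = p.1 * |σy * (ρ * cos p.2 + a * sin p.2)| := by
          rw [show σy * (ρ * (p.1 * cos p.2) + a * (p.1 * sin p.2))
              = p.1 * (σy * (ρ * cos p.2 + a * sin p.2)) by ring, abs_mul, abs_of_pos hr]
        have rhs_eq : |σx * (p.1 * cos p.2)| = p.1 * (σx * |cos p.2|) := by
          rw [show σx * (p.1 * cos p.2) = p.1 * (σx * cos p.2) by ring, abs_mul,
            abs_of_pos hr, abs_mul, abs_of_pos hσx]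
        rw [lhs_eq, rhs_eq]
        exact mul_lt_mul_iff_right₀ hr
      show p.1 • S.indicator f (polarCoord.symm p)
          = (fun x : ℝ => x * rexp (-x ^ 2 / 2)) p.1
              * ((fun θ : ℝ => (2*π)⁻¹ * A.indicator (fun _ => (1:ℝ)) θ) p.2)
      simp only
      have hfval : f (polarCoord.symm p) = (2*π)⁻¹ * rexp (-p.1 ^ 2 / 2) := by
        rw [hsymm, hf_def]
        simp only [gaussianPDFReal, NNReal.coe_one, mul_one, sub_zero]
        have h2π : (0:ℝ) ≤ 2 * π := by positivity
        rw [show (√(2*π))⁻¹ * rexp (-(p.1 * cos p.2) ^ 2 / 2)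
            * ((√(2*π))⁻¹ * rexp (-(p.1 * sin p.2) ^ 2 / 2))
            = ((√(2*π))⁻¹ * (√(2*π))⁻¹)
              * (rexp (-(p.1 * cos p.2) ^ 2 / 2) * rexp (-(p.1 * sin p.2) ^ 2 / 2)) by ring,
          ← mul_inv, Real.mul_self_sqrt h2π, ← Real.exp_add]
        have harg : -(p.1 * cos p.2) ^ 2 / 2 + -(p.1 * sin p.2) ^ 2 / 2 = -p.1 ^ 2 / 2 := by
          linear_combination (-(p.1 ^ 2) / 2) * Real.sin_sq_add_cos_sq p.2
        rw [harg]
      by_cases hmemA : p.2 ∈ A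
      · rw [indicator_of_mem (hmem.mpr hmemA) f, indicator_of_mem hmemA, hfval, smul_eq_mul]
        ring
      · rw [indicator_of_notMem (fun hc => hmemA (hmem.mp hc)) f,
          indicator_of_notMem hmemA, smul_eq_mul]
        ring
    calc ∫ p in S, f p = ∫ p, S.indicator f p := (integral_indicator hS).symm
      _ = ∫ p in polarCoord.target, p.1 • S.indicator f (polarCoord.symm p) :=
          (integral_comp_polarCoord_symm _).symm
      _ = ∫ p in (Ioi (0:ℝ) ×ˢ Ioo (-π) π),
            (fun x : ℝ => x * rexp (-x ^ 2 / 2)) p.1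
              * ((fun θ : ℝ => (2*π)⁻¹ * A.indicator (fun _ => (1:ℝ)) θ) p.2) := e
      _ = (∫ x in Ioi (0:ℝ), x * rexp (-x ^ 2 / 2))
            * ∫ θ in Ioo (-π) π, (2*π)⁻¹ * A.indicator (fun _ => (1:ℝ)) θ := by
          rw [MeasureTheory.Measure.volume_eq_prod]
          exact setIntegral_prod_mul (fun x : ℝ => x * rexp (-x ^ 2 / 2))
            (fun θ : ℝ => (2*π)⁻¹ * A.indicator (fun _ => (1:ℝ)) θ) (Ioi 0) (Ioo (-π) π)
  have harc_le : -arctan ((σx/σy + ρ) / a) ≤ arctan ((σx/σy - ρ) / a) := by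
    rw [← Real.arctan_neg]
    apply Real.arctan_strictMono.monotone
    rw [← neg_div, div_le_div_iff₀ ha ha]
    have : 0 < σx / σy := div_pos hσx hσy
    nlinarith
  have mid : ∫ θ in Ioc (-(π/2)) (π/2), A.indicator (fun _ => (1:ℝ)) θ
      = arctan ((σx/σy - ρ) / a) + arctan ((σx/σy + ρ) / a) := by
    rw [integral_Ioc_eq_integral_Ioo, setIntegral_indicator hA, inter_comm, hA_def, ha_def]
    rw [bvn_angle_set_inter hσx hσy hρ]
    rw [setIntegral_const, smul_eq_mul, mul_one, measureReal_def, Real.volume_Ioo,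
      ENNReal.toReal_ofReal (by rw [← ha_def]; linarith), sub_neg_eq_add, ← ha_def]
  rw [step1, step2, bvn_radial_integral_eq_one, one_mul, integral_const_mul,
    bvn_J_split A hA hper, mid]
  congr 1
  have hπ : (π : ℝ) ≠ 0 := Real.pi_ne_zero
  field_simp
end

section
/- Let Z₁, Z₂ be independent standard normal random variables, let σ_x, σ_y > 0 and ρ ∈ (−1,1), and set X = σ_x·Z₁ and Y = σ_y·(ρ·Z₁ + √(1−ρ²)·Z₂). Suppose r = σ_x/σ_y ≤ 1. Then Pr(|X| > |Y|) ≤ (2/π)·arctan(r), and equality holds when ρ = 0; i.e., over all correlations ρ ∈ (−1,1), the probability Pr(|X| > |Y|) is maximized at ρ = 0 with maximal value (2/π)·arctan(r). -/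
open MeasureTheory ProbabilityTheory Real Set

lemma radial_integral : ∫ R in Ioi (0:ℝ), R * rexp (-R ^ 2 / 2) = 1 := by
  have hderiv : ∀ x ∈ Ici (0:ℝ), HasDerivAt (fun R : ℝ => -rexp (-R ^ 2 / 2))
      (x * rexp (-x ^ 2 / 2)) x := by
    intro x _
    have h1 : HasDerivAt (fun R : ℝ => -R ^ 2 / 2) (-x) x := by
      have := ((hasDerivAt_pow 2 x).neg).div_const 2
      simpa using this.congr_deriv (by ring)
    have := (h1.exp).neg
    exact this.congr_deriv (by ring)
  have hint : IntegrableOn (fun R : ℝ => R * rexp (-R ^ 2 / 2)) (Ioi 0) := by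
    have : IntegrableOn (fun R : ℝ => R * rexp (-(1/2) * R ^ 2)) (Ioi 0) := by
      exact (integrable_mul_exp_neg_mul_sq (by norm_num : (0:ℝ) < 1/2)).restrict
    refine this.congr_fun (fun x _ => by ring_nf) measurableSet_Ioi
  have htend : Filter.Tendsto (fun R : ℝ => -rexp (-R ^ 2 / 2)) Filter.atTop (nhds 0) := by
    rw [← neg_zero]
    refine Filter.Tendsto.neg ?_
    refine Real.tendsto_exp_atBot.comp ?_
    refine Filter.Tendsto.atBot_div_const (by norm_num) ?_
    exact Filter.tendsto_neg_atTop_atBot.comp (Filter.tendsto_pow_atTop two_ne_zero)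
  rw [integral_Ioi_of_hasDerivAt_of_tendsto' hderiv hint htend]
  norm_num

lemma my_polar_symm (p : ℝ × ℝ) : polarCoord.symm p = (p.1 * cos p.2, p.1 * sin p.2) := rfl
lemma my_polar_target : polarCoord.target = Ioi (0:ℝ) ×ˢ Ioo (-π) π := rfl

lemma mem_cone_iff (c a : ℝ) {p : ℝ × ℝ} (hp : p ∈ polarCoord.target) :
    polarCoord.symm p ∈ {z : ℝ × ℝ | 0 < z.1 ∧ c * z.1 < z.2 ∧ z.2 < a * z.1} ↔
      p.2 ∈ Ioo (arctan c) (arctan a) := by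
  rw [my_polar_target] at hp
  obtain ⟨hR, hθ⟩ := hp
  rw [mem_Ioi] at hR
  rw [my_polar_symm]
  simp only [mem_setOf_eq, mem_Ioo]
  constructor
  · rintro ⟨h1, h2, h3⟩
    have hcos : 0 < cos p.2 := by
      by_contra hc
      push_neg at hc
      nlinarith
    have hθ2 : p.2 ∈ Ioo (-(π/2)) (π/2) := by
      constructor
      · by_contra hle
        push_neg at hle
        have : cos p.2 ≤ 0 := by
          rw [← Real.cos_neg]
          refine Real.cos_nonpos_of_pi_div_two_le_of_le (by linarith) ?_
          have := hθ.1; linarith [Real.pi_pos]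
        linarith
      · by_contra hle
        push_neg at hle
        have : cos p.2 ≤ 0 := by
          refine Real.cos_nonpos_of_pi_div_two_le_of_le hle ?_
          have := hθ.2; linarith [Real.pi_pos]
        linarith
    have htan1 : c < tan p.2 := by
      rw [Real.tan_eq_sin_div_cos, lt_div_iff₀ hcos]
      nlinarith
    have htan2 : tan p.2 < a := by
      rw [Real.tan_eq_sin_div_cos, div_lt_iff₀ hcos]
      nlinarith
    constructor
    · have := Real.arctan_strictMono htan1
      rwa [Real.arctan_tan hθ2.1 hθ2.2] at this
    · have := Real.arctan_strictMono htan2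
      rwa [Real.arctan_tan hθ2.1 hθ2.2] at this
  · rintro ⟨h1, h2⟩
    have hθ2 : p.2 ∈ Ioo (-(π/2)) (π/2) :=
      ⟨lt_of_le_of_lt (le_of_lt (Real.neg_pi_div_two_lt_arctan c)) h1,
       lt_trans h2 (Real.arctan_lt_pi_div_two a)⟩
    have hcos : 0 < cos p.2 := Real.cos_pos_of_mem_Ioo hθ2
    have htan1 : c < tan p.2 := by
      have := Real.tan_lt_tan_of_lt_of_lt_pi_div_two
        (Real.neg_pi_div_two_lt_arctan c) hθ2.2 h1
      rwa [Real.tan_arctan] at this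
    have htan2 : tan p.2 < a := by
      have := Real.tan_lt_tan_of_lt_of_lt_pi_div_two hθ2.1
        (Real.arctan_lt_pi_div_two a) h2
      rwa [Real.tan_arctan] at this
    rw [Real.tan_eq_sin_div_cos, lt_div_iff₀ hcos] at htan1
    rw [Real.tan_eq_sin_div_cos, div_lt_iff₀ hcos] at htan2
    refine ⟨by positivity, by nlinarith, by nlinarith⟩

lemma gauss_prod_eq :
    (gaussianReal 0 1).prod (gaussianReal 0 1) =
      (volume.prod volume).withDensity
        (fun z : ℝ × ℝ => gaussianPDF 0 1 z.1 * gaussianPDF 0 1 z.2) := by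
  refine Measure.prod_eq fun s t hs ht => ?_
  rw [withDensity_apply _ (hs.prod ht), ← Measure.prod_restrict,
    lintegral_prod_mul (measurable_gaussianPDF 0 1).aemeasurable
      (measurable_gaussianPDF 0 1).aemeasurable,
    gaussianReal_apply 0 one_ne_zero s, gaussianReal_apply 0 one_ne_zero t]

lemma gauss_prod_apply {T : Set (ℝ × ℝ)} (hT : MeasurableSet T) :
    (gaussianReal 0 1).prod (gaussianReal 0 1) T =
      ENNReal.ofReal (∫ z in T, gaussianPDFReal 0 1 z.1 * gaussianPDFReal 0 1 z.2
        ∂(volume.prod volume)) := by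
  rw [gauss_prod_eq, withDensity_apply _ hT,
    ofReal_integral_eq_lintegral_ofReal]
  · congr 1
    funext z
    rw [gaussianPDF, gaussianPDF, ENNReal.ofReal_mul (gaussianPDFReal_nonneg 0 1 z.1)]
  · exact ((integrable_gaussianPDFReal 0 1).mul_prod (integrable_gaussianPDFReal 0 1)).restrict
  · exact ae_of_all _ fun z => mul_nonneg (gaussianPDFReal_nonneg 0 1 _) (gaussianPDFReal_nonneg 0 1 _)

lemma gpdf_one (x : ℝ) : gaussianPDFReal 0 1 x = (√(2*π))⁻¹ * rexp (-x^2/2) := by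
  simp [gaussianPDFReal]

lemma cone_integral (c a : ℝ) (hca : c ≤ a) :
    ∫ z in {z : ℝ × ℝ | 0 < z.1 ∧ c * z.1 < z.2 ∧ z.2 < a * z.1},
      gaussianPDFReal 0 1 z.1 * gaussianPDFReal 0 1 z.2 ∂(volume.prod volume)
    = (arctan a - arctan c) / (2 * π) := by
  set T : Set (ℝ × ℝ) := {z : ℝ × ℝ | 0 < z.1 ∧ c * z.1 < z.2 ∧ z.2 < a * z.1} with hT
  have hTm : MeasurableSet T := by
    rw [hT]
    simp only [setOf_and]
    exact (measurableSet_lt measurable_const measurable_fst).inter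
      ((measurableSet_lt (measurable_fst.const_mul c) measurable_snd).inter
        (measurableSet_lt measurable_snd (measurable_fst.const_mul a)))
  set S : Set (ℝ × ℝ) := Ioi (0:ℝ) ×ˢ Ioo (arctan c) (arctan a) with hS
  have hSm : MeasurableSet S := measurableSet_Ioi.prod measurableSet_Ioo
  have hsub : S ⊆ polarCoord.target := by
    rw [my_polar_target, hS]
    refine prod_mono subset_rfl (Ioo_subset_Ioo ?_ ?_)
    · have := Real.neg_pi_div_two_lt_arctan c; have := Real.pi_pos; linarith
    · have := Real.arctan_lt_pi_div_two a; have := Real.pi_pos; linarith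
  rw [← Measure.volume_eq_prod, ← integral_indicator hTm,
    ← integral_comp_polarCoord_symm (T.indicator
      fun z => gaussianPDFReal 0 1 z.1 * gaussianPDFReal 0 1 z.2)]
  rw [setIntegral_congr_fun (f := fun p => p.1 • T.indicator
        (fun z => gaussianPDFReal 0 1 z.1 * gaussianPDFReal 0 1 z.2) (polarCoord.symm p))
      (g := S.indicator (fun q : ℝ × ℝ => q.1 * ((2*π)⁻¹ * rexp (-q.1^2/2))))
      polarCoord.open_target.measurableSet ?_]
  · rw [setIntegral_indicator hSm, Set.inter_eq_right.mpr hsub]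
    have hprod : ∫ q in (Ioi (0:ℝ)) ×ˢ Ioo (arctan c) (arctan a),
        q.1 * ((2*π)⁻¹ * rexp (-q.1^2/2)) ∂(volume.prod volume)
        = (∫ R in Ioi (0:ℝ), R * ((2*π)⁻¹ * rexp (-R^2/2)))
          * (∫ _ in Ioo (arctan c) (arctan a), (1:ℝ)) := by
      have := setIntegral_prod_mul (μ := (volume : Measure ℝ)) (ν := (volume : Measure ℝ))
        (fun R : ℝ => R * ((2*π)⁻¹ * rexp (-R^2/2))) (fun _ : ℝ => (1:ℝ))
        (Ioi 0) (Ioo (arctan c) (arctan a))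
      simpa using this
    rw [hS, Measure.volume_eq_prod, hprod]
    have h1 : ∫ R in Ioi (0:ℝ), R * ((2*π)⁻¹ * rexp (-R^2/2)) = (2*π)⁻¹ := by
      rw [show (fun R : ℝ => R * ((2*π)⁻¹ * rexp (-R^2/2)))
          = fun R : ℝ => (2*π)⁻¹ * (R * rexp (-R^2/2)) from by funext R; ring]
      rw [MeasureTheory.integral_const_mul, radial_integral, mul_one]
    have h2 : ∫ _ in Ioo (arctan c) (arctan a), (1:ℝ) = arctan a - arctan c := by
      rw [setIntegral_const, Real.volume_real_Ioo_of_le (Real.arctan_strictMono.monotone hca),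
        smul_eq_mul, mul_one]
    rw [h1, h2]
    field_simp
  · intro p hp
    by_cases hmem : p.2 ∈ Ioo (arctan c) (arctan a)
    · have hp' : p ∈ Ioi (0:ℝ) ×ˢ Ioo (-π) π := by rw [← my_polar_target]; exact hp
      have hpS : p ∈ S := ⟨hp'.1, hmem⟩
      have hpT : polarCoord.symm p ∈ T := (mem_cone_iff c a hp).mpr hmem
      dsimp only
      rw [Set.indicator_of_mem hpT, Set.indicator_of_mem hpS, my_polar_symm]
      simp only [smul_eq_mul]
      rw [gpdf_one, gpdf_one]
      have hs : (√(2*π))⁻¹ * (√(2*π))⁻¹ = (2*π)⁻¹ := by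
        rw [← mul_inv, Real.mul_self_sqrt (by positivity)]
      have key : rexp (-(p.1*cos p.2)^2/2) * rexp (-(p.1*sin p.2)^2/2) = rexp (-p.1^2/2) := by
        rw [← Real.exp_add]
        congr 1
        have h := Real.sin_sq_add_cos_sq p.2
        linear_combination (-(p.1^2)/2) * h
      calc p.1 * ((√(2*π))⁻¹ * rexp (-(p.1*cos p.2)^2/2) * ((√(2*π))⁻¹ * rexp (-(p.1*sin p.2)^2/2)))
          = p.1 * (((√(2*π))⁻¹ * (√(2*π))⁻¹) * (rexp (-(p.1*cos p.2)^2/2) * rexp (-(p.1*sin p.2)^2/2))) := by ring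
        _ = p.1 * ((2*π)⁻¹ * rexp (-p.1^2/2)) := by rw [hs, key]
    · have hpT : polarCoord.symm p ∉ T := fun h => hmem ((mem_cone_iff c a hp).mp h)
      have hpS : p ∉ S := fun h => hmem h.2
      dsimp only
      rw [Set.indicator_of_notMem hpT, Set.indicator_of_notMem hpS, smul_zero]

lemma gauss_neg_invariant :
    ((gaussianReal 0 1).prod (gaussianReal 0 1)).map
        (fun z : ℝ × ℝ => (-z.1, -z.2)) = (gaussianReal 0 1).prod (gaussianReal 0 1) := by
  have h1 : (gaussianReal 0 1).map (fun x : ℝ => -x) = gaussianReal 0 1 := by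
    have := gaussianReal_map_const_mul (μ := 0) (v := 1) (-1)
    simp only [neg_one_mul] at this
    convert this using 2 <;> norm_num
  have h2 : (fun z : ℝ × ℝ => (-z.1, -z.2))
      = Prod.map (fun x : ℝ => -x) (fun x : ℝ => -x) := rfl
  rw [h2, ← Measure.map_prod_map _ _ measurable_neg measurable_neg, h1]

lemma char_pos (σx σy ρ : ℝ) (hσx : 0 < σx) (hσy : 0 < σy) (hs : 0 < Real.sqrt (1 - ρ^2))
    {z : ℝ × ℝ} (hz : 0 < z.1) :
    (|σy * (ρ * z.1 + Real.sqrt (1 - ρ^2) * z.2)| < |σx * z.1|) ↔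
      ((-((σx/σy + ρ)/Real.sqrt (1 - ρ^2))) * z.1 < z.2
        ∧ z.2 < ((σx/σy - ρ)/Real.sqrt (1 - ρ^2)) * z.1) := by
  set s := Real.sqrt (1 - ρ^2)
  set r := σx / σy with hr
  have h1 : |σx * z.1| = σy * (r * z.1) := by
    rw [abs_of_pos (by positivity), hr]; field_simp
  rw [h1, abs_mul, abs_of_pos hσy, mul_lt_mul_iff_right₀ hσy, abs_lt]
  have hs' : s ≠ 0 := ne_of_gt hs
  constructor
  · rintro ⟨u1, u2⟩
    constructor
    · rw [neg_mul, neg_lt, div_mul_eq_mul_div, lt_div_iff₀ hs]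
      nlinarith
    · rw [div_mul_eq_mul_div, lt_div_iff₀ hs]
      nlinarith
  · rintro ⟨u1, u2⟩
    rw [neg_mul, neg_lt, div_mul_eq_mul_div, lt_div_iff₀ hs] at u1
    rw [div_mul_eq_mul_div, lt_div_iff₀ hs] at u2
    constructor <;> nlinarith

lemma gauss_measure_S (σx σy ρ : ℝ) (hσx : 0 < σx) (hσy : 0 < σy)
    (hρ : ρ ∈ Set.Ioo (-1:ℝ) 1) :
    (gaussianReal 0 1).prod (gaussianReal 0 1)
      {z : ℝ × ℝ | |σy * (ρ * z.1 + Real.sqrt (1 - ρ ^ 2) * z.2)| < |σx * z.1|}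
    = ENNReal.ofReal ((arctan ((σx/σy - ρ)/Real.sqrt (1 - ρ ^ 2))
        + arctan ((σx/σy + ρ)/Real.sqrt (1 - ρ ^ 2))) / π) := by
  obtain ⟨hρ1, hρ2⟩ := hρ
  have hs : 0 < Real.sqrt (1 - ρ ^ 2) := Real.sqrt_pos.mpr (by nlinarith)
  set s : ℝ := Real.sqrt (1 - ρ ^ 2) with hsdef
  set r : ℝ := σx / σy with hrdef
  have hr0 : 0 < r := div_pos hσx hσy
  set a : ℝ := (r - ρ)/s with hadef
  set c : ℝ := -((r + ρ)/s) with hcdef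
  have hca : c ≤ a := by
    rw [hcdef, hadef, ← neg_div]
    gcongr
    linarith
  set T : Set (ℝ × ℝ) := {z : ℝ × ℝ | 0 < z.1 ∧ c * z.1 < z.2 ∧ z.2 < a * z.1} with hTdef
  have hTm : MeasurableSet T := by
    rw [hTdef]
    simp only [setOf_and]
    exact (measurableSet_lt measurable_const measurable_fst).inter
      ((measurableSet_lt (measurable_fst.const_mul c) measurable_snd).inter
        (measurableSet_lt measurable_snd (measurable_fst.const_mul a)))
  set N : ℝ × ℝ → ℝ × ℝ := fun z => (-z.1, -z.2) with hNdef
  have hN : Measurable N := (measurable_fst.neg.prodMk measurable_snd.neg)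
  have hST : {z : ℝ × ℝ | |σy * (ρ * z.1 + s * z.2)| < |σx * z.1|} = T ∪ N ⁻¹' T := by
    ext z
    simp only [mem_setOf_eq, mem_union, mem_preimage]
    have hNT : N z ∈ T ↔ (0 < -z.1 ∧ c * (-z.1) < -z.2 ∧ -z.2 < a * (-z.1)) := Iff.rfl
    rcases lt_trichotomy z.1 0 with h | h | h
    · have hflip : (|σy * (ρ * z.1 + s * z.2)| < |σx * z.1|)
          ↔ (|σy * (ρ * (-z.1) + s * (-z.2))| < |σx * (-z.1)|) := by
        rw [show ρ * (-z.1) + s * (-z.2) = -(ρ * z.1 + s * z.2) from by ring,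
          mul_neg, abs_neg, mul_neg, abs_neg]
      have hchar := char_pos σx σy ρ hσx hσy hs (z := N z) (by simpa [hNdef] using h)
      constructor
      · intro hc
        right
        exact ⟨(by simpa using h : (0:ℝ) < -z.1), hchar.mp (hflip.mp hc)⟩
      · rintro (hzT | hzNT)
        · have h1 : 0 < z.1 := hzT.1
          exact absurd h1 (by linarith)
        · exact hflip.mpr (hchar.mpr hzNT.2)
    · constructor
      · intro hc
        rw [h] at hc
        simp only [mul_zero, abs_zero] at hc
        exact absurd hc (not_lt.mpr (abs_nonneg _))
      · rintro (hzT | hzNT)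
        · have h1 : 0 < z.1 := hzT.1
          exact absurd h1 (by rw [h]; exact lt_irrefl 0)
        · have h1 : 0 < -z.1 := hzNT.1
          exact absurd h1 (by rw [h]; simp)
    · have hchar := char_pos σx σy ρ hσx hσy hs (z := z) h
      constructor
      · intro hc
        exact Or.inl ⟨h, hchar.mp hc⟩
      · rintro (hzT | hzNT)
        · exact hchar.mpr hzT.2
        · have h1 : 0 < -z.1 := hzNT.1
          exact absurd h1 (by linarith)
  rw [hST, measure_union ?hdisj (hN hTm)]
  case hdisj =>
    refine Set.disjoint_left.mpr fun z hzT hzNT => ?_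
    have h1 : 0 < z.1 := hzT.1
    have h2 : 0 < -z.1 := hzNT.1
    linarith
  have hmapT : (gaussianReal 0 1).prod (gaussianReal 0 1) (N ⁻¹' T)
      = (gaussianReal 0 1).prod (gaussianReal 0 1) T := by
    conv_rhs => rw [← gauss_neg_invariant]
    rw [Measure.map_apply hN hTm]
  rw [hmapT, gauss_prod_apply hTm, hTdef, cone_integral c a hca,
    ← ENNReal.ofReal_add
      (div_nonneg (sub_nonneg.mpr (Real.arctan_strictMono.monotone hca)) (by positivity))
      (div_nonneg (sub_nonneg.mpr (Real.arctan_strictMono.monotone hca)) (by positivity))]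
  congr 1
  rw [hcdef, Real.arctan_neg]
  ring

lemma arctan_ineq (r ρ : ℝ) (hr0 : 0 < r) (hr1 : r ≤ 1) (hρ1 : -1 < ρ) (hρ2 : ρ < 1) :
    arctan ((r - ρ)/Real.sqrt (1 - ρ ^ 2)) + arctan ((r + ρ)/Real.sqrt (1 - ρ ^ 2))
      ≤ 2 * arctan r := by
  have h1ρ : 0 < 1 - ρ ^ 2 := by nlinarith
  have hs : 0 < Real.sqrt (1 - ρ ^ 2) := Real.sqrt_pos.mpr h1ρ
  set s : ℝ := Real.sqrt (1 - ρ ^ 2) with hsdef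
  have hs2 : s ^ 2 = 1 - ρ ^ 2 := Real.sq_sqrt (le_of_lt h1ρ)
  have hs1 : s ≤ 1 := by nlinarith [sq_nonneg (s - 1)]
  rcases eq_or_lt_of_le hr1 with heq | hlt
  · have ha : 0 < (r - ρ)/s := div_pos (by linarith) hs
    have hb : (r + ρ)/s = ((r - ρ)/s)⁻¹ := by
      rw [inv_div, div_eq_div_iff hs.ne' (by linarith : r - ρ ≠ 0)]
      linear_combination (r + 1) * heq - hs2
    rw [hb, Real.arctan_inv_of_pos ha, heq, Real.arctan_one]
    linarith
  · have hab : (r - ρ)/s * ((r + ρ)/s) < 1 := by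
      rw [div_mul_div_comm, div_lt_one (by positivity)]
      nlinarith
    have h1r : 0 < 1 - r^2 := by nlinarith
    rw [Real.arctan_add hab, Real.two_mul_arctan (by linarith) hlt]
    apply Real.arctan_strictMono.monotone
    have hd : 1 - (r - ρ)/s * ((r + ρ)/s) = (1 - r^2)/s^2 := by
      rw [div_mul_div_comm, show (r-ρ)*(r+ρ) = r^2 - ρ^2 from by ring,
        show s*s = s^2 from by ring, hs2]
      field_simp
      ring
    have key : ((r - ρ)/s + (r + ρ)/s)/(1 - (r - ρ)/s * ((r + ρ)/s)) = 2*r*s/(1 - r^2) := by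
      rw [← add_div, show r - ρ + (r + ρ) = 2*r from by ring, hd]
      field_simp
    rw [key, div_le_div_iff₀ h1r h1r]
    nlinarith [mul_nonneg (mul_nonneg hr0.le (sub_nonneg.mpr hs1)) h1r.le]

/-- For a centered bivariate normal pair `(X, Y)` with variances `σ_x², σ_y²` and
correlation `ρ ∈ (−1,1)`, realized as `X = σ_x·Z₁`, `Y = σ_y·(ρZ₁ + √(1−ρ²)Z₂)` for
independent standard normals, if `r = σ_x/σ_y ≤ 1` then
`Pr(|X| > |Y|) ≤ (2/π)·arctan(r)`, with equality at `ρ = 0`: the probability over all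
correlations is maximized at `ρ = 0`, with maximal value `(2/π)·arctan(r)`. -/
theorem bivariate_normal_abs_gt_prob_max (σx σy ρ : ℝ) (hσx : 0 < σx) (hσy : 0 < σy)
    (hρ : ρ ∈ Set.Ioo (-1 : ℝ) 1) (hr : σx / σy ≤ 1) :
    (Measure.prod (gaussianReal 0 1) (gaussianReal 0 1))
        {z : ℝ × ℝ |
          |σy * (ρ * z.1 + Real.sqrt (1 - ρ ^ 2) * z.2)| < |σx * z.1|}
      ≤ ENNReal.ofReal ((2 / π) * Real.arctan (σx / σy))
    ∧ (Measure.prod (gaussianReal 0 1) (gaussianReal 0 1))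
        {z : ℝ × ℝ |
          |σy * ((0 : ℝ) * z.1 + Real.sqrt (1 - (0 : ℝ) ^ 2) * z.2)| < |σx * z.1|}
      = ENNReal.ofReal ((2 / π) * Real.arctan (σx / σy)) := by
  have h0 : (0:ℝ) ∈ Set.Ioo (-1 : ℝ) 1 := by constructor <;> norm_num
  constructor
  · rw [gauss_measure_S σx σy ρ hσx hσy hρ]
    apply ENNReal.ofReal_le_ofReal
    have hineq := arctan_ineq (σx/σy) ρ (div_pos hσx hσy) hr hρ.1 hρ.2
    rw [show (2/π) * arctan (σx/σy) = (2 * arctan (σx/σy))/π from by ring]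
    gcongr
  · rw [gauss_measure_S σx σy 0 hσx hσy h0]
    congr 1
    norm_num
    ring
end

section
/- Let Z₁, Z₂ be independent standard normal random variables, let σ_x, σ_y > 0 and ρ ∈ (−1,1), and set X = σ_x·Z₁ and Y = σ_y·(ρ·Z₁ + √(1−ρ²)·Z₂). With r = σ_x/σ_y, the conditional expectation of |X| given the event {|X| > |Y|} equals E[ |X| · 1{|X|>|Y|} ] / Pr(|X|>|Y|) = σ_x·√(π/2) · [ (r−ρ)/√(1+r²−2rρ) + (r+ρ)/√(1+r²+2rρ) ] / [ arctan( (r−ρ)/√(1−ρ²) ) + arctan( (r+ρ)/√(1−ρ²) ) ]. -/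
open MeasureTheory ProbabilityTheory Real Set Filter
open scoped ENNReal NNReal

noncomputable section BVN

namespace BVN

/-- standard normal pdf -/
def phi (x : ℝ) : ℝ := (Real.sqrt (2 * π))⁻¹ * Real.exp (-x ^ 2 / 2)

/-- standard normal cdf -/
def Phi (x : ℝ) : ℝ := ∫ t in Set.Iic x, phi t

lemma sqrt_two_pi_pos : 0 < Real.sqrt (2 * π) :=
  Real.sqrt_pos.2 (by positivity)

lemma phi_pos (x : ℝ) : 0 < phi x := by
  unfold phi; positivity

lemma phi_nonneg (x : ℝ) : 0 ≤ phi x := (phi_pos x).le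

@[fun_prop, continuity] lemma continuous_phi : Continuous phi := by
  unfold phi; fun_prop

lemma phi_neg (x : ℝ) : phi (-x) = phi x := by simp [phi]

lemma phi_zero : phi 0 = (Real.sqrt (2 * π))⁻¹ := by simp [phi]

lemma phi_le (x : ℝ) : phi x ≤ (Real.sqrt (2 * π))⁻¹ := by
  unfold phi
  rw [mul_comm]
  apply mul_le_of_le_one_left (by positivity)
  rw [Real.exp_le_one_iff]
  have : (0:ℝ) ≤ x ^ 2 := sq_nonneg x
  linarith

lemma phi_eq (x : ℝ) : phi x = (Real.sqrt (2 * π))⁻¹ * Real.exp (-(2⁻¹) * x ^ 2) := by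
  unfold phi; ring_nf

lemma integrable_phi : Integrable phi := by
  have : Integrable (fun x : ℝ => Real.exp (-(2⁻¹) * x ^ 2)) :=
    integrable_exp_neg_mul_sq (by norm_num)
  have h2 := this.const_mul ((Real.sqrt (2 * π))⁻¹)
  apply h2.congr
  filter_upwards with x
  rw [phi_eq]

lemma integral_phi : ∫ x, phi x = 1 := by
  have h : ∫ x : ℝ, Real.exp (-(2⁻¹) * x ^ 2) = Real.sqrt (π / 2⁻¹) :=
    integral_gaussian 2⁻¹
  have : ∫ x, phi x = (Real.sqrt (2 * π))⁻¹ * Real.sqrt (π / 2⁻¹) := by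
    simp only [phi_eq]
    rw [integral_const_mul, h]
  rw [this]
  rw [show π / 2⁻¹ = 2 * π by ring]
  exact inv_mul_cancel₀ (by positivity)


lemma Phi_sub (a b : ℝ) : Phi b - Phi a = ∫ x in a..b, phi x :=
  intervalIntegral.integral_Iic_sub_Iic integrable_phi.integrableOn integrable_phi.integrableOn

lemma Phi_nonneg (x : ℝ) : 0 ≤ Phi x :=
  setIntegral_nonneg measurableSet_Iic fun t _ => phi_nonneg t

lemma Phi_le_one (x : ℝ) : Phi x ≤ 1 := by
  rw [← integral_phi]
  exact setIntegral_le_integral integrable_phi (.of_forall fun t => phi_nonneg t)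

lemma Phi_zero : Phi 0 = 1 / 2 := by
  have hsplit : Phi 0 + ∫ x in Ioi (0:ℝ), phi x = 1 := by
    rw [← integral_phi, ← intervalIntegral.integral_Iic_add_Ioi (b := (0:ℝ)) integrable_phi.integrableOn
      integrable_phi.integrableOn]
    rfl
  have hsym : ∫ x in Ioi (0:ℝ), phi x = Phi 0 := by
    have h0 : ∫ x in Ioi (0:ℝ), phi x = ∫ x in Ioi (0:ℝ), phi (-x) := by
      simp [phi_neg]
    rw [h0, integral_comp_neg_Ioi]
    simp only [neg_zero]
    rfl
  rw [hsym] at hsplit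
  linarith

lemma Phi_neg (x : ℝ) : Phi (-x) = 1 - Phi x := by
  have h1 : Phi x - Phi 0 = ∫ t in (0:ℝ)..x, phi t := Phi_sub 0 x
  have h2 : Phi (-x) - Phi 0 = ∫ t in (0:ℝ)..(-x), phi t := Phi_sub 0 (-x)
  have h3 : ∫ t in (0:ℝ)..(-x), phi t = - ∫ t in (0:ℝ)..x, phi t := by
    have h4 : ∫ t in (0:ℝ)..(-x), phi t = ∫ t in (0:ℝ)..(-x), phi (-t) := by
      simp [phi_neg]
    rw [h4, intervalIntegral.integral_comp_neg phi, neg_neg, neg_zero,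
      intervalIntegral.integral_symm]
  rw [Phi_zero] at h1 h2
  rw [h3, ← h1] at h2
  linarith

lemma hasDerivAt_Phi (x : ℝ) : HasDerivAt Phi (phi x) x := by
  have key : HasDerivAt (fun y => ∫ t in (0:ℝ)..y, phi t) (phi x) x := by
    exact intervalIntegral.integral_hasDerivAt_right
      integrable_phi.intervalIntegrable
      (continuous_phi.stronglyMeasurableAtFilter _ _)
      continuous_phi.continuousAt
  have : Phi = fun y => Phi 0 + ∫ t in (0:ℝ)..y, phi t := by
    funext y
    have := Phi_sub 0 y
    linarith
  rw [this]
  simpa using key.const_add (Phi 0)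

@[fun_prop, continuity] lemma continuous_Phi : Continuous Phi :=
  continuous_iff_continuousAt.2 fun x => (hasDerivAt_Phi x).continuousAt

lemma tendsto_Phi_atTop : Tendsto Phi atTop (nhds 1) := by
  have h : Tendsto (fun y => ∫ t in (0:ℝ)..y, phi t) atTop
      (nhds (∫ t in Ioi (0:ℝ), phi t)) :=
    intervalIntegral_tendsto_integral_Ioi 0 integrable_phi.integrableOn tendsto_id
  have hIoi : ∫ t in Ioi (0:ℝ), phi t = 1 / 2 := by
    have hsplit : Phi 0 + ∫ x in Ioi (0:ℝ), phi x = 1 := by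
      rw [← integral_phi, ← intervalIntegral.integral_Iic_add_Ioi (b := (0:ℝ)) integrable_phi.integrableOn
        integrable_phi.integrableOn]
      rfl
    rw [Phi_zero] at hsplit; linarith
  rw [hIoi] at h
  have heq : Phi = fun y => Phi 0 + ∫ t in (0:ℝ)..y, phi t := by
    funext y; have := Phi_sub 0 y; linarith
  rw [heq, Phi_zero]
  have := h.const_add (1/2 : ℝ)
  norm_num at this ⊢
  exact this

lemma hasDerivAt_phi (x : ℝ) : HasDerivAt phi (-x * phi x) x := by
  have h1 : HasDerivAt (fun x : ℝ => -x ^ 2 / 2) (-x) x := by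
    have := ((hasDerivAt_pow 2 x).neg).div_const 2
    simpa using this.congr_deriv (by ring)
  have h2 := (h1.exp).const_mul ((Real.sqrt (2 * π))⁻¹)
  unfold phi
  refine h2.congr_deriv ?_
  ring

lemma tendsto_phi_atTop : Tendsto phi atTop (nhds 0) := by
  have h0 : Tendsto (fun x : ℝ => x ^ 2 / 2) atTop atTop :=
    (tendsto_pow_atTop (two_ne_zero)).atTop_div_const (by norm_num)
  have h1 : Tendsto (fun x : ℝ => -x ^ 2 / 2) atTop atBot := by
    have := Filter.tendsto_neg_atTop_atBot.comp h0
    apply this.congr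
    intro x; simp [Function.comp]; ring
  have h2 := (Real.tendsto_exp_atBot.comp h1).const_mul ((Real.sqrt (2 * π))⁻¹)
  unfold phi
  simpa only [Function.comp_def, mul_zero] using h2

lemma phi_mul_phi (c z : ℝ) :
    phi z * phi (c * z) = (Real.sqrt (2 * π))⁻¹ * phi (Real.sqrt (1 + c ^ 2) * z) := by
  have h : (Real.sqrt (1 + c ^ 2) * z) ^ 2 = z ^ 2 + (c * z) ^ 2 := by
    rw [mul_pow, Real.sq_sqrt (by positivity : (0:ℝ) ≤ 1 + c ^ 2)]; ring
  unfold phi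
  rw [h, show -(z ^ 2 + (c * z) ^ 2) / 2 = -z ^ 2 / 2 + -(c * z) ^ 2 / 2 by ring,
    Real.exp_add]
  ring

lemma hasDerivAt_phi_comp (k z : ℝ) (hk : k ≠ 0) :
    HasDerivAt (fun z => -(k ^ 2)⁻¹ * phi (k * z)) (z * phi (k * z)) z := by
  have h1 : HasDerivAt (fun z : ℝ => k * z) k z := by
    simpa using (hasDerivAt_id z).const_mul k
  have h2 := ((hasDerivAt_phi (k * z)).comp z h1).const_mul (-(k ^ 2)⁻¹)
  refine h2.congr_deriv ?_
  field_simp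

lemma integral_z_phi (k : ℝ) (hk : 0 < k) :
    ∫ z in Ioi (0:ℝ), z * phi (k * z) = (k ^ 2)⁻¹ * (Real.sqrt (2 * π))⁻¹ := by
  have hlim : Tendsto (fun z => -(k ^ 2)⁻¹ * phi (k * z)) atTop (nhds 0) := by
    have h1 : Tendsto (fun z : ℝ => k * z) atTop atTop :=
      Tendsto.const_mul_atTop hk tendsto_id
    have := (tendsto_phi_atTop.comp h1).const_mul (-(k ^ 2)⁻¹)
    simpa [Function.comp] using this
  have := integral_Ioi_of_hasDerivAt_of_nonneg
    (g := fun z => -(k ^ 2)⁻¹ * phi (k * z)) (g' := fun z => z * phi (k * z)) (a := 0)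
    (Continuous.continuousWithinAt (by fun_prop)) (fun x _ => hasDerivAt_phi_comp k x hk.ne')
    (fun x hx => mul_nonneg (le_of_lt hx) (phi_nonneg _)) hlim
  rw [this]
  simp [phi_zero]

lemma integrableOn_z_phi (k : ℝ) (hk : 0 < k) :
    IntegrableOn (fun z => z * phi (k * z)) (Ioi (0:ℝ)) := by
  have hlim : Tendsto (fun z => -(k ^ 2)⁻¹ * phi (k * z)) atTop (nhds 0) := by
    have h1 : Tendsto (fun z : ℝ => k * z) atTop atTop :=
      Tendsto.const_mul_atTop hk tendsto_id
    have := (tendsto_phi_atTop.comp h1).const_mul (-(k ^ 2)⁻¹)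
    simpa [Function.comp] using this
  exact integrableOn_Ioi_deriv_of_nonneg (Continuous.continuousWithinAt (by fun_prop))
    (fun x _ => hasDerivAt_phi_comp k x hk.ne')
    (fun x hx => mul_nonneg (le_of_lt hx) (phi_nonneg _)) hlim

lemma tendsto_phi_mul_Phi (c : ℝ) :
    Tendsto (fun z => phi z * Phi (c * z)) atTop (nhds 0) := by
  apply squeeze_zero_norm (fun z => ?_) tendsto_phi_atTop
  rw [Real.norm_eq_abs, abs_mul, abs_of_nonneg (phi_nonneg z), abs_of_nonneg (Phi_nonneg _)]
  exact mul_le_of_le_one_right (phi_nonneg z) (Phi_le_one _)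

lemma tendsto_Phi_comp_mul (k : ℝ) (hk : 0 < k) :
    Tendsto (fun z => Phi (k * z)) atTop (nhds 1) := by
  exact tendsto_Phi_atTop.comp (Tendsto.const_mul_atTop hk tendsto_id)

lemma hasDerivAt_Phi_comp (c z : ℝ) :
    HasDerivAt (fun z => Phi (c * z)) (c * phi (c * z)) z := by
  have h1 : HasDerivAt (fun z : ℝ => c * z) c z := by
    simpa using (hasDerivAt_id z).const_mul c
  have := (hasDerivAt_Phi (c * z)).comp z h1
  simpa [mul_comm, Function.comp_def] using this

lemma keyA_hasDerivAt (c : ℝ) (z : ℝ) :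
    HasDerivAt (fun z => -(phi z * Phi (c * z))
        + c / (Real.sqrt (2 * π) * Real.sqrt (1 + c ^ 2))
          * Phi (Real.sqrt (1 + c ^ 2) * z))
      (z * phi z * Phi (c * z)) z := by
  set k := Real.sqrt (1 + c ^ 2) with hkdef
  have hk : 0 < k := Real.sqrt_pos.2 (by positivity)
  have h1 : HasDerivAt (fun z => phi z * Phi (c * z))
      (-z * phi z * Phi (c * z) + phi z * (c * phi (c * z))) z := by
    have := (hasDerivAt_phi z).mul (hasDerivAt_Phi_comp c z)
    exact this

  have h2 := (hasDerivAt_Phi_comp k z).const_mul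
      (c / (Real.sqrt (2 * π) * k))
  have h3 := (h1.neg).add h2
  refine h3.congr_deriv ?_
  have hmul : phi z * phi (c * z) = (Real.sqrt (2 * π))⁻¹ * phi (k * z) := phi_mul_phi c z
  have h2π : Real.sqrt (2 * π) ≠ 0 := sqrt_two_pi_pos.ne'
  have hk' : k ≠ 0 := hk.ne'
  rw [show phi z * (c * phi (c * z)) = c * (phi z * phi (c * z)) by ring, hmul]
  field_simp
  ring

lemma keyA (c : ℝ) :
    ∫ z in Ioi (0:ℝ), z * phi z * Phi (c * z)
      = (1 + c / Real.sqrt (1 + c ^ 2)) / (2 * Real.sqrt (2 * π)) := by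
  set k := Real.sqrt (1 + c ^ 2) with hkdef
  have hk : 0 < k := Real.sqrt_pos.2 (by positivity)
  have hlim : Tendsto (fun z => -(phi z * Phi (c * z))
      + c / (Real.sqrt (2 * π) * k) * Phi (k * z)) atTop
      (nhds (c / (Real.sqrt (2 * π) * k))) := by
    have h1 := (tendsto_phi_mul_Phi c).neg
    have h2 := (tendsto_Phi_comp_mul k hk).const_mul (c / (Real.sqrt (2 * π) * k))
    have := h1.add h2
    simpa using this
  have hcont : ContinuousWithinAt (fun z => -(phi z * Phi (c * z))
      + c / (Real.sqrt (2 * π) * k) * Phi (k * z)) (Ici (0:ℝ)) 0 := by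
    apply Continuous.continuousWithinAt
    fun_prop
  have := integral_Ioi_of_hasDerivAt_of_nonneg hcont
    (fun x _ => keyA_hasDerivAt c x)
    (fun x hx => mul_nonneg (mul_nonneg (le_of_lt hx) (phi_nonneg x)) (Phi_nonneg _))
    hlim
  rw [this]
  simp only [mul_zero, Phi_zero, phi_zero]
  field_simp
  ring

lemma integrableOn_keyA (c : ℝ) :
    IntegrableOn (fun z => z * phi z * Phi (c * z)) (Ioi (0:ℝ)) := by
  apply Integrable.mono' (g := fun z => z * phi (1 * z))
    ((integrableOn_z_phi 1 one_pos))
  · apply Continuous.aestronglyMeasurable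
    fun_prop
  · filter_upwards [ae_restrict_mem measurableSet_Ioi] with z hz
    have hz' : (0:ℝ) < z := hz
    rw [Real.norm_eq_abs, abs_mul, abs_mul, abs_of_pos hz', abs_of_nonneg (phi_nonneg z),
      abs_of_nonneg (Phi_nonneg _), one_mul]
    exact mul_le_of_le_one_right (mul_nonneg hz'.le (phi_nonneg z)) (Phi_le_one _)

lemma integral_phi_Ioi : ∫ x in Ioi (0:ℝ), phi x = 1 / 2 := by
  have hsplit : Phi 0 + ∫ x in Ioi (0:ℝ), phi x = 1 := by
    rw [← integral_phi, ← intervalIntegral.integral_Iic_add_Ioi (b := (0:ℝ))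
      integrable_phi.integrableOn integrable_phi.integrableOn]
    rfl
  rw [Phi_zero] at hsplit; linarith

lemma integrableOn_phi_Phi (c : ℝ) :
    IntegrableOn (fun z => phi z * Phi (c * z)) (Ioi (0:ℝ)) := by
  apply Integrable.mono' (g := phi) integrable_phi.integrableOn
  · exact Continuous.aestronglyMeasurable (by fun_prop)
  · filter_upwards with z
    rw [Real.norm_eq_abs, abs_mul, abs_of_nonneg (phi_nonneg z), abs_of_nonneg (Phi_nonneg _)]
    exact mul_le_of_le_one_right (phi_nonneg z) (Phi_le_one _)

/-- value of `∫ z in Ioi 0, phi z * (z * phi (c * z))` -/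
lemma integral_D (c : ℝ) :
    ∫ z in Ioi (0:ℝ), phi z * (z * phi (c * z)) = (2 * π)⁻¹ * (1 + c ^ 2)⁻¹ := by
  set k := Real.sqrt (1 + c ^ 2) with hkdef
  have hk : 0 < k := Real.sqrt_pos.2 (by positivity)
  have hpt : ∀ z : ℝ, phi z * (z * phi (c * z))
      = (Real.sqrt (2 * π))⁻¹ * (z * phi (k * z)) := by
    intro z
    have h := phi_mul_phi c z
    rw [← hkdef] at h
    rw [show phi z * (z * phi (c * z)) = z * (phi z * phi (c * z)) by ring, h]
    ring
  calc ∫ z in Ioi (0:ℝ), phi z * (z * phi (c * z))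
      = ∫ z in Ioi (0:ℝ), (Real.sqrt (2 * π))⁻¹ * (z * phi (k * z)) := by
        exact setIntegral_congr_fun measurableSet_Ioi fun z _ => hpt z
    _ = (Real.sqrt (2 * π))⁻¹ * ((k ^ 2)⁻¹ * (Real.sqrt (2 * π))⁻¹) := by
        rw [integral_const_mul, integral_z_phi k hk]
    _ = (2 * π)⁻¹ * (1 + c ^ 2)⁻¹ := by
        rw [hkdef, Real.sq_sqrt (by positivity : (0:ℝ) ≤ 1 + c ^ 2)]
        rw [show ((Real.sqrt (2*π))⁻¹ * ((1+c^2)⁻¹ * (Real.sqrt (2*π))⁻¹))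
          = (Real.sqrt (2*π) * Real.sqrt (2*π))⁻¹ * (1+c^2)⁻¹ by ring]
        rw [Real.mul_self_sqrt (by positivity)]

/-- Q function -/
def Q (c : ℝ) : ℝ := ∫ z in Ioi (0:ℝ), phi z * Phi (c * z)

lemma hasDerivAt_Q (c : ℝ) :
    HasDerivAt Q ((2 * π)⁻¹ * (1 + c ^ 2)⁻¹) c := by
  have key := hasDerivAt_integral_of_dominated_loc_of_deriv_le
    (μ := volume.restrict (Ioi (0:ℝ))) (x₀ := c)
    (F := fun x z => phi z * Phi (x * z)) (F' := fun x z => phi z * (z * phi (x * z)))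
    (bound := fun z => (Real.sqrt (2 * π))⁻¹ * (z * phi z))
    (s := Metric.ball c 1) (Metric.ball_mem_nhds c one_pos)
    (Eventually.of_forall fun x => Continuous.aestronglyMeasurable (by fun_prop))
    (integrableOn_phi_Phi c)
    (Continuous.aestronglyMeasurable (by fun_prop))
    ?_ ?_ ?_
  · rw [show (2 * π)⁻¹ * (1 + c ^ 2)⁻¹ = ∫ z in Ioi (0:ℝ), phi z * (z * phi (c * z)) from
      (integral_D c).symm]
    exact key.2
  · filter_upwards [ae_restrict_mem measurableSet_Ioi] with z hz x _
    have hz' : (0:ℝ) < z := hz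
    rw [Real.norm_eq_abs, abs_mul, abs_mul, abs_of_nonneg (phi_nonneg z), abs_of_pos hz',
      abs_of_nonneg (phi_nonneg _)]
    calc phi z * (z * phi (x * z)) ≤ phi z * (z * (Real.sqrt (2 * π))⁻¹) := by
          apply mul_le_mul_of_nonneg_left _ (phi_nonneg z)
          exact mul_le_mul_of_nonneg_left (phi_le _) hz'.le
      _ = (Real.sqrt (2 * π))⁻¹ * (z * phi z) := by ring
  · apply Integrable.const_mul
    have := integrableOn_z_phi 1 one_pos
    simp only [one_mul] at this
    exact this
  · filter_upwards with z x _
    have h1 : HasDerivAt (fun x : ℝ => x * z) z x := hasDerivAt_mul_const z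
    have h2 := (hasDerivAt_Phi (x * z)).comp x h1
    have h3 := h2.const_mul (phi z)
    refine h3.congr_deriv ?_
    ring

lemma Q_zero : Q 0 = 1 / 4 := by
  unfold Q
  simp only [zero_mul, Phi_zero]
  rw [integral_mul_const, integral_phi_Ioi]
  norm_num

lemma keyB (c : ℝ) : Q c = 1 / 4 + Real.arctan c / (2 * π) := by
  have hd : ∀ x : ℝ, HasDerivAt (fun c => Q c - Real.arctan c / (2 * π)) 0 x := by
    intro x
    have h1 := hasDerivAt_Q x
    have h2 := (Real.hasDerivAt_arctan x).div_const (2 * π)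
    have h3 := h1.sub h2
    refine h3.congr_deriv ?_
    have hpi : (0:ℝ) < π := Real.pi_pos
    field_simp
    ring
  have hconst : Q c - Real.arctan c / (2 * π) = Q 0 - Real.arctan 0 / (2 * π) :=
    is_const_of_deriv_eq_zero (fun x => (hd x).differentiableAt)
      (fun x => (hd x).deriv) c 0
  rw [Q_zero, Real.arctan_zero] at hconst
  have : Q c - Real.arctan c / (2 * π) = 1 / 4 := by rw [hconst]; ring
  linarith

/- Gaussian measure and density -/

lemma gauss_pdf_eq : gaussianPDFReal 0 1 = phi := by
  funext x
  simp [gaussianPDFReal, phi]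

lemma gauss_apply (s : Set ℝ) :
    (gaussianReal 0 1 s) = ENNReal.ofReal (∫ x in s, phi x) := by
  rw [gaussianReal_apply_eq_integral 0 one_ne_zero s]
  simp [gauss_pdf_eq]

lemma gauss_apply_toReal (s : Set ℝ) :
    (gaussianReal 0 1 s).toReal = ∫ x in s, phi x := by
  rw [gauss_apply, ENNReal.toReal_ofReal (integral_nonneg fun x => phi_nonneg x)]

lemma Phi_mono : Monotone Phi := by
  intro x y hxy
  have h := Phi_sub x y
  have h2 : 0 ≤ ∫ t in x..y, phi t :=
    intervalIntegral.integral_nonneg hxy fun t _ => phi_nonneg t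
  linarith

lemma gauss_Ioo (u v : ℝ) :
    gaussianReal 0 1 (Ioo u v) = ENNReal.ofReal (Phi v - Phi u) := by
  rcases le_or_gt u v with h | h
  · rw [gauss_apply]
    congr 1
    have : ∫ x in Ioo u v, phi x = ∫ x in Ioc u v, phi x :=
      setIntegral_congr_set Ioo_ae_eq_Ioc
    rw [this, ← intervalIntegral.integral_of_le h, ← Phi_sub]
  · rw [Ioo_eq_empty (by exact not_lt.2 h.le)]
    simp only [measure_empty]
    rw [ENNReal.ofReal_eq_zero.2]
    have := Phi_mono h.le
    linarith

lemma integral_gauss (g : ℝ → ℝ) :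
    ∫ x, g x ∂(gaussianReal 0 1) = ∫ x, phi x * g x := by
  rw [gaussianReal_of_var_ne_zero 0 one_ne_zero]
  have hpdf : gaussianPDF 0 1 = fun x => ((phi x).toNNReal : ℝ≥0∞) := by
    funext x
    rw [gaussianPDF, gauss_pdf_eq]
    rfl
  rw [hpdf, integral_withDensity_eq_integral_smul
    (continuous_phi.measurable.real_toNNReal) g]
  congr 1
  funext x
  rw [NNReal.smul_def, Real.coe_toNNReal _ (phi_nonneg x)]
  rfl

lemma integrable_abs_mul_phi : Integrable (fun x : ℝ => |x| * phi x) := by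
  have h1 : Integrable (fun x : ℝ => |x * Real.exp (-(2⁻¹) * x ^ 2)|) := by
    apply Integrable.abs
    exact integrable_mul_exp_neg_mul_sq (by norm_num : (0:ℝ) < 2⁻¹)
  have h2 := h1.const_mul ((Real.sqrt (2 * π))⁻¹)
  apply h2.congr
  filter_upwards with x
  rw [abs_mul, abs_of_nonneg (Real.exp_nonneg _), phi_eq]
  ring

/-- even function integral = twice Ioi integral -/
lemma even_integral {f : ℝ → ℝ} (hint : Integrable f)
    (heven : ∀ x, f (-x) = f x) :
    ∫ x, f x = 2 * ∫ x in Ioi (0:ℝ), f x := by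
  rw [← intervalIntegral.integral_Iic_add_Ioi (b := (0:ℝ)) hint.integrableOn hint.integrableOn]
  have : ∫ x in Iic (0:ℝ), f x = ∫ x in Ioi (0:ℝ), f x := by
    have h1 : ∫ x in Iic (0:ℝ), f x = ∫ x in Iic (0:ℝ), f (-x) := by
      simp only [heven]
    rw [h1, integral_comp_neg_Iic]
    norm_num
  rw [this]; ring

/-! ### The 2D part -/

section main

variable {σx σy ρ : ℝ}

/-- the event set -/
def Sset (σx σy ρ : ℝ) : Set (ℝ × ℝ) :=
  {z | |σy * (ρ * z.1 + Real.sqrt (1 - ρ ^ 2) * z.2)| < |σx * z.1|}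

lemma isOpen_Sset : IsOpen (Sset σx σy ρ) := by
  apply isOpen_lt <;> fun_prop

/-- slope coefficients -/
def aa (σx σy ρ : ℝ) : ℝ := (σx / σy - ρ) / Real.sqrt (1 - ρ ^ 2)
def bb (σx σy ρ : ℝ) : ℝ := (σx / σy + ρ) / Real.sqrt (1 - ρ ^ 2)

/-- conditional probability of the section -/
def G (σx σy ρ : ℝ) (x : ℝ) : ℝ :=
  Phi (aa σx σy ρ * |x|) + Phi (bb σx σy ρ * |x|) - 1

lemma continuous_G : Continuous (G σx σy ρ) := by
  unfold G; fun_prop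

lemma section_eq (hσx : 0 < σx) (hσy : 0 < σy) (hρ : ρ ^ 2 < 1) (x : ℝ) :
    Prod.mk x ⁻¹' Sset σx σy ρ
      = Ioo ((-(σx / σy) * |x| - ρ * x) / Real.sqrt (1 - ρ ^ 2))
          ((σx / σy * |x| - ρ * x) / Real.sqrt (1 - ρ ^ 2)) := by
  set s := Real.sqrt (1 - ρ ^ 2) with hs
  have hs0 : 0 < s := Real.sqrt_pos.2 (by linarith)
  ext y
  simp only [Set.mem_preimage, Sset, Set.mem_setOf_eq, Set.mem_Ioo]
  rw [abs_mul, abs_mul, abs_of_pos hσx, abs_of_pos hσy]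
  rw [show σx * |x| = σy * (σx / σy * |x|) by field_simp]
  rw [mul_lt_mul_iff_right₀ hσy, abs_lt]
  constructor
  · rintro ⟨h1, h2⟩
    constructor
    · rw [div_lt_iff₀ hs0]; linarith
    · rw [lt_div_iff₀ hs0]; linarith
  · rintro ⟨h1, h2⟩
    rw [div_lt_iff₀ hs0] at h1
    rw [lt_div_iff₀ hs0] at h2
    constructor <;> linarith

lemma gauss_section (hσx : 0 < σx) (hσy : 0 < σy) (hρ : ρ ^ 2 < 1) (x : ℝ) :
    gaussianReal 0 1 (Prod.mk x ⁻¹' Sset σx σy ρ)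
      = ENNReal.ofReal (G σx σy ρ x) := by
  set s := Real.sqrt (1 - ρ ^ 2) with hs
  have hs0 : 0 < s := Real.sqrt_pos.2 (by linarith)
  rw [section_eq hσx hσy hρ x, gauss_Ioo]
  congr 1
  rcases le_or_gt 0 x with hx | hx
  · rw [abs_of_nonneg hx]
    have hv : (σx / σy * x - ρ * x) / s = aa σx σy ρ * |x| := by
      rw [abs_of_nonneg hx, aa]; ring
    have hu : (-(σx / σy) * x - ρ * x) / s = -(bb σx σy ρ * |x|) := by
      rw [abs_of_nonneg hx, bb]; ring
    rw [hv, hu, Phi_neg]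
    unfold G; ring
  · rw [abs_of_neg hx]
    have hv : (σx / σy * -x - ρ * x) / s = bb σx σy ρ * |x| := by
      rw [abs_of_neg hx, bb]; ring
    have hu : (-(σx / σy) * -x - ρ * x) / s = -(aa σx σy ρ * |x|) := by
      rw [abs_of_neg hx, aa]; ring
    rw [hv, hu, Phi_neg]
    unfold G; ring

lemma aa_add_bb_pos (hσx : 0 < σx) (hσy : 0 < σy) (hρ : ρ ^ 2 < 1) :
    0 < aa σx σy ρ + bb σx σy ρ := by
  have hs0 : 0 < Real.sqrt (1 - ρ ^ 2) := Real.sqrt_pos.2 (by linarith)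
  have : aa σx σy ρ + bb σx σy ρ = 2 * (σx / σy) / Real.sqrt (1 - ρ ^ 2) := by
    unfold aa bb; ring
  rw [this]
  positivity

lemma G_nonneg (hσx : 0 < σx) (hσy : 0 < σy) (hρ : ρ ^ 2 < 1) (x : ℝ) :
    0 ≤ G σx σy ρ x := by
  have hab := aa_add_bb_pos hσx hσy hρ
  have h1 : -(bb σx σy ρ * |x|) ≤ aa σx σy ρ * |x| := by nlinarith [abs_nonneg x]
  have h2 := Phi_mono h1
  rw [Phi_neg] at h2
  unfold G; linarith

lemma G_le_one (x : ℝ) : G σx σy ρ x ≤ 1 := by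
  have := Phi_le_one (aa σx σy ρ * |x|)
  have := Phi_le_one (bb σx σy ρ * |x|)
  unfold G; linarith

lemma G_even (x : ℝ) : G σx σy ρ (-x) = G σx σy ρ x := by unfold G; rw [abs_neg]

lemma gaussianPDF_eq : gaussianPDF 0 1 = fun x => ENNReal.ofReal (phi x) := by
  funext x
  rw [gaussianPDF, gauss_pdf_eq]

lemma integrable_abs_gauss (c : ℝ) :
    Integrable (fun x => |c * x|) (gaussianReal 0 1) := by
  rw [gaussianReal_of_var_ne_zero 0 one_ne_zero, gaussianPDF_eq]
  rw [integrable_withDensity_iff (by fun_prop) (Eventually.of_forall fun x => ENNReal.ofReal_lt_top)]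
  have h := integrable_abs_mul_phi.const_mul |c|
  apply h.congr
  filter_upwards with x
  rw [abs_mul, ENNReal.toReal_ofReal (phi_nonneg x)]
  ring

lemma denom (hσx : 0 < σx) (hσy : 0 < σy) (hρ : ρ ^ 2 < 1) :
    (((gaussianReal 0 1).prod (gaussianReal 0 1)) (Sset σx σy ρ)).toReal
      = (Real.arctan (aa σx σy ρ) + Real.arctan (bb σx σy ρ)) / π := by
  have hS : MeasurableSet (Sset σx σy ρ) := isOpen_Sset.measurableSet
  rw [Measure.prod_apply hS]
  rw [lintegral_congr (gauss_section hσx hσy hρ)]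
  have hGint : Integrable (G σx σy ρ) (gaussianReal 0 1) := by
    apply Integrable.mono' (integrable_const (1:ℝ)) continuous_G.aestronglyMeasurable
    filter_upwards with x
    rw [Real.norm_eq_abs, abs_of_nonneg (G_nonneg hσx hσy hρ x)]
    exact G_le_one x
  rw [← ofReal_integral_eq_lintegral_ofReal hGint
    (Eventually.of_forall (G_nonneg hσx hσy hρ))]
  rw [ENNReal.toReal_ofReal (integral_nonneg (G_nonneg hσx hσy hρ))]
  rw [integral_gauss]
  have hint2 : Integrable (fun x => phi x * G σx σy ρ x) := by
    apply Integrable.mono' integrable_phi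
      (Continuous.aestronglyMeasurable (continuous_phi.mul continuous_G))
    filter_upwards with x
    rw [Real.norm_eq_abs, Pi.mul_apply, abs_mul, abs_of_nonneg (phi_nonneg x),
      abs_of_nonneg (G_nonneg hσx hσy hρ x)]
    exact mul_le_of_le_one_right (phi_nonneg x) (G_le_one x)
  rw [even_integral hint2 (fun x => by rw [phi_neg, G_even])]
  have hcong : ∀ x ∈ Ioi (0:ℝ), phi x * G σx σy ρ x
      = phi x * Phi (aa σx σy ρ * x) + (phi x * Phi (bb σx σy ρ * x) - phi x) := by
    intro x hx
    have hx' : (0:ℝ) < x := hx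
    unfold G
    rw [abs_of_pos hx']
    ring
  rw [setIntegral_congr_fun measurableSet_Ioi hcong]
  have hb : IntegrableOn (fun x => phi x * Phi (bb σx σy ρ * x) - phi x) (Ioi (0:ℝ)) :=
    (integrableOn_phi_Phi _).sub integrable_phi.integrableOn
  rw [integral_add (integrableOn_phi_Phi _) hb]
  rw [integral_sub (integrableOn_phi_Phi _) integrable_phi.integrableOn]
  have hQa : ∫ x in Ioi (0:ℝ), phi x * Phi (aa σx σy ρ * x) = Q (aa σx σy ρ) := rfl
  have hQb : ∫ x in Ioi (0:ℝ), phi x * Phi (bb σx σy ρ * x) = Q (bb σx σy ρ) := rfl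
  rw [hQa, hQb, keyB, keyB, integral_phi_Ioi]
  have hπ : (0:ℝ) < π := Real.pi_pos
  field_simp
  ring

lemma numer (hσx : 0 < σx) (hσy : 0 < σy) (hρ : ρ ^ 2 < 1) :
    ∫ z in Sset σx σy ρ, |σx * z.1| ∂((gaussianReal 0 1).prod (gaussianReal 0 1))
      = σx * (aa σx σy ρ / Real.sqrt (1 + aa σx σy ρ ^ 2)
          + bb σx σy ρ / Real.sqrt (1 + bb σx σy ρ ^ 2)) / Real.sqrt (2 * π) := by
  set a := aa σx σy ρ with ha
  set b := bb σx σy ρ with hb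
  have hS : MeasurableSet (Sset σx σy ρ) := isOpen_Sset.measurableSet
  have hfint : Integrable (fun z : ℝ × ℝ => |σx * z.1|)
      ((gaussianReal 0 1).prod (gaussianReal 0 1)) := by
    have h1 := (integrable_abs_gauss σx).mul_prod (integrable_const (1:ℝ)
      (μ := gaussianReal 0 1))
    apply h1.congr
    filter_upwards with z
    rw [mul_one]
  have hind : Integrable ((Sset σx σy ρ).indicator (fun z : ℝ × ℝ => |σx * z.1|))
      ((gaussianReal 0 1).prod (gaussianReal 0 1)) := hfint.indicator hS
  rw [← integral_indicator hS]
  rw [integral_prod _ hind]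
  have hinner : ∀ x : ℝ, (∫ y, (Sset σx σy ρ).indicator (fun z : ℝ × ℝ => |σx * z.1|) (x, y)
      ∂(gaussianReal 0 1)) = |σx * x| * G σx σy ρ x := by
    intro x
    have heq : (fun y => (Sset σx σy ρ).indicator (fun z : ℝ × ℝ => |σx * z.1|) (x, y))
        = (Prod.mk x ⁻¹' Sset σx σy ρ).indicator (fun _ => |σx * x|) := by
      funext y
      by_cases h : (x, y) ∈ Sset σx σy ρ
      · rw [Set.indicator_of_mem h, Set.indicator_of_mem (by exact h)]
      · rw [Set.indicator_of_notMem h, Set.indicator_of_notMem (by exact h)]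
    rw [heq, integral_indicator (measurable_prodMk_left hS)]
    rw [setIntegral_const, measureReal_def, gauss_section hσx hσy hρ x,
      ENNReal.toReal_ofReal (G_nonneg hσx hσy hρ x), smul_eq_mul]
    ring
  rw [integral_congr_ae (Eventually.of_forall hinner)]
  rw [integral_gauss]
  have hint2 : Integrable (fun x => phi x * (|σx * x| * G σx σy ρ x)) := by
    apply Integrable.mono' ((integrable_abs_mul_phi).const_mul |σx|)
    · apply Continuous.aestronglyMeasurable
      apply continuous_phi.mul
      exact (continuous_abs.comp (continuous_const.mul continuous_id)).mul continuous_G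
    · filter_upwards with x
      rw [Real.norm_eq_abs, abs_mul, abs_mul, abs_of_nonneg (phi_nonneg x), abs_abs,
        abs_of_nonneg (G_nonneg hσx hσy hρ x), abs_mul]
      calc phi x * (|σx| * |x| * G σx σy ρ x) ≤ phi x * (|σx| * |x| * 1) := by
            apply mul_le_mul_of_nonneg_left _ (phi_nonneg x)
            exact mul_le_mul_of_nonneg_left (G_le_one x) (by positivity)
        _ = |σx| * (|x| * phi x) := by ring
  rw [even_integral hint2 (fun x => by rw [phi_neg, G_even, abs_mul, abs_mul, abs_neg])]
  have hcong : ∀ x ∈ Ioi (0:ℝ), phi x * (|σx * x| * G σx σy ρ x)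
      = σx * (x * phi x * Phi (a * x) + (x * phi x * Phi (b * x) - x * phi (1 * x))) := by
    intro x hx
    have hx' : (0:ℝ) < x := hx
    unfold G
    rw [← ha, ← hb, abs_of_pos hx', abs_of_pos (by positivity : (0:ℝ) < σx * x), one_mul]
    ring
  rw [setIntegral_congr_fun measurableSet_Ioi hcong]
  rw [integral_const_mul]
  have hsub : IntegrableOn (fun x => x * phi x * Phi (b * x) - x * phi (1 * x)) (Ioi (0:ℝ)) :=
    (integrableOn_keyA b).sub (integrableOn_z_phi 1 one_pos)
  rw [integral_add (integrableOn_keyA a) hsub]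
  rw [integral_sub (integrableOn_keyA b) (integrableOn_z_phi 1 one_pos)]
  rw [keyA, keyA, integral_z_phi 1 one_pos]
  have h2π : (0:ℝ) < Real.sqrt (2 * π) := sqrt_two_pi_pos
  have hka : (0:ℝ) < Real.sqrt (1 + a ^ 2) := Real.sqrt_pos.2 (by positivity)
  have hkb : (0:ℝ) < Real.sqrt (1 + b ^ 2) := Real.sqrt_pos.2 (by positivity)
  field_simp
  ring

lemma ratio_identity (hσx : 0 < σx) (hσy : 0 < σy) (hρ : ρ ^ 2 < 1) :
    aa σx σy ρ / Real.sqrt (1 + aa σx σy ρ ^ 2)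
      = (σx / σy - ρ) / Real.sqrt (1 + (σx / σy) ^ 2 - 2 * (σx / σy) * ρ) := by
  set r := σx / σy with hr
  set s := Real.sqrt (1 - ρ ^ 2) with hs
  have hs0 : 0 < s := Real.sqrt_pos.2 (by linarith)
  have hs2 : s ^ 2 = 1 - ρ ^ 2 := Real.sq_sqrt (by linarith)
  have hpos : 0 < 1 + r ^ 2 - 2 * r * ρ := by nlinarith [sq_nonneg (r - ρ)]
  have h1 : 1 + aa σx σy ρ ^ 2 = (1 + r ^ 2 - 2 * r * ρ) / s ^ 2 := by
    rw [aa, ← hr, ← hs, div_pow]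
    field_simp
    nlinarith [hs2]
  rw [h1, Real.sqrt_div hpos.le, Real.sqrt_sq hs0.le]
  rw [aa, ← hr, ← hs]
  have hq : 0 < Real.sqrt (1 + r ^ 2 - 2 * r * ρ) := Real.sqrt_pos.2 hpos
  field_simp

lemma ratio_identity_b (hσx : 0 < σx) (hσy : 0 < σy) (hρ : ρ ^ 2 < 1) :
    bb σx σy ρ / Real.sqrt (1 + bb σx σy ρ ^ 2)
      = (σx / σy + ρ) / Real.sqrt (1 + (σx / σy) ^ 2 + 2 * (σx / σy) * ρ) := by
  set r := σx / σy with hr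
  set s := Real.sqrt (1 - ρ ^ 2) with hs
  have hs0 : 0 < s := Real.sqrt_pos.2 (by linarith)
  have hs2 : s ^ 2 = 1 - ρ ^ 2 := Real.sq_sqrt (by linarith)
  have hpos : 0 < 1 + r ^ 2 + 2 * r * ρ := by nlinarith [sq_nonneg (r + ρ)]
  have h1 : 1 + bb σx σy ρ ^ 2 = (1 + r ^ 2 + 2 * r * ρ) / s ^ 2 := by
    rw [bb, ← hr, ← hs, div_pow]
    field_simp
    nlinarith [hs2]
  rw [h1, Real.sqrt_div hpos.le, Real.sqrt_sq hs0.le]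
  rw [bb, ← hr, ← hs]
  have hq : 0 < Real.sqrt (1 + r ^ 2 + 2 * r * ρ) := Real.sqrt_pos.2 hpos
  field_simp

lemma arctan_sum_pos (hσx : 0 < σx) (hσy : 0 < σy) (hρ : ρ ^ 2 < 1) :
    0 < Real.arctan (aa σx σy ρ) + Real.arctan (bb σx σy ρ) := by
  have hab := aa_add_bb_pos hσx hσy hρ
  have h1 : -bb σx σy ρ < aa σx σy ρ := by linarith
  have h2 := Real.arctan_strictMono h1
  rw [Real.arctan_neg] at h2
  linarith

end main

end BVN
end BVN

open BVN in
/-- For a centered bivariate normal pair `(X, Y)` with variances `σ_x², σ_y²` and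
correlation `ρ ∈ (−1,1)` (realized via independent standard normals `Z₁, Z₂`), with
`r = σ_x/σ_y`, the conditional expectation `E[|X| · 1{|X|>|Y|}] / Pr(|X|>|Y|)` equals
`σ_x·√(π/2)·[(r−ρ)/√(1+r²−2rρ) + (r+ρ)/√(1+r²+2rρ)]
  / [arctan((r−ρ)/√(1−ρ²)) + arctan((r+ρ)/√(1−ρ²))]`. -/
theorem bivariate_normal_conditional_expectation (σx σy ρ : ℝ)
    (hσx : 0 < σx) (hσy : 0 < σy) (hρ : ρ ∈ Set.Ioo (-1 : ℝ) 1) :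
    (∫ z in {z : ℝ × ℝ |
          |σy * (ρ * z.1 + Real.sqrt (1 - ρ ^ 2) * z.2)| < |σx * z.1|},
        |σx * z.1| ∂(Measure.prod (gaussianReal 0 1) (gaussianReal 0 1)))
      / ((Measure.prod (gaussianReal 0 1) (gaussianReal 0 1))
          {z : ℝ × ℝ |
            |σy * (ρ * z.1 + Real.sqrt (1 - ρ ^ 2) * z.2)| < |σx * z.1|}).toReal
      = σx * Real.sqrt (π / 2)
          * ((σx / σy - ρ) / Real.sqrt (1 + (σx / σy) ^ 2 - 2 * (σx / σy) * ρ)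
              + (σx / σy + ρ) / Real.sqrt (1 + (σx / σy) ^ 2 + 2 * (σx / σy) * ρ))
          / (Real.arctan ((σx / σy - ρ) / Real.sqrt (1 - ρ ^ 2))
              + Real.arctan ((σx / σy + ρ) / Real.sqrt (1 - ρ ^ 2))) := by
  obtain ⟨hρ1, hρ2⟩ := hρ
  have hρsq : ρ ^ 2 < 1 := by nlinarith
  have hset : {z : ℝ × ℝ |
      |σy * (ρ * z.1 + Real.sqrt (1 - ρ ^ 2) * z.2)| < |σx * z.1|} = Sset σx σy ρ := rfl
  have hprod : Measure.prod (gaussianReal 0 1) (gaussianReal 0 1)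
      = (gaussianReal 0 1).prod (gaussianReal 0 1) := rfl
  rw [hset, hprod, numer hσx hσy hρsq, denom hσx hσy hρsq]
  have haa : (σx / σy - ρ) / Real.sqrt (1 - ρ ^ 2) = aa σx σy ρ := rfl
  have hbb : (σx / σy + ρ) / Real.sqrt (1 - ρ ^ 2) = bb σx σy ρ := rfl
  rw [haa, hbb, ← ratio_identity hσx hσy hρsq, ← ratio_identity_b hσx hσy hρsq]
  have hsum := arctan_sum_pos hσx hσy hρsq
  have h2π : (0:ℝ) < Real.sqrt (2 * π) := sqrt_two_pi_pos
  have hπ : (0:ℝ) < π := Real.pi_pos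
  have hid : Real.sqrt (π / 2) * Real.sqrt (2 * π) = π := by
    rw [← Real.sqrt_mul (by positivity), show π / 2 * (2 * π) = π ^ 2 by ring,
      Real.sqrt_sq hπ.le]
  have hsq : Real.sqrt (π / 2) = π / Real.sqrt (2 * π) := by
    rw [eq_div_iff h2π.ne', hid]
  rw [hsq]
  field_simp
end

section
/- Let Z₁, Z₂ be independent standard normal random variables, let σ_x, σ_y > 0 and ρ ∈ (−1,1), and set X = σ_x·Z₁ and Y = σ_y·(ρ·Z₁ + √(1−ρ²)·Z₂). Then for every t > 0, Pr( |X| > t and |X| > |Y| ) ≤ exp( −t²/(2σ_x²) ) · Pr( |X| > |Y| ); equivalently, the conditional tail probability Pr(|X| > t | |X| > |Y|) is at most exp(−t²/(2σ_x²)). -/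
open MeasureTheory ProbabilityTheory Real Set
open scoped ENNReal NNReal

/-- Polar coordinates change of variables for the Lebesgue integral. -/
lemma lintegral_comp_polarCoord_symm' (g : ℝ × ℝ → ℝ≥0∞) :
    ∫⁻ p, g p = ∫⁻ p in polarCoord.target, ENNReal.ofReal p.1 * g (polarCoord.symm p) := by
  set B : ℝ × ℝ → ℝ × ℝ →L[ℝ] ℝ × ℝ := fun p =>
    LinearMap.toContinuousLinearMap (Matrix.toLin (Module.Basis.finTwoProd ℝ) (Module.Basis.finTwoProd ℝ)
      !![Real.cos p.2, -p.1 * Real.sin p.2; Real.sin p.2, p.1 * Real.cos p.2]) with hB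
  have A : ∀ p ∈ polarCoord.target, HasFDerivWithinAt polarCoord.symm (B p) polarCoord.target p :=
    fun p _ => (hasFDerivAt_polarCoord_symm p).hasFDerivWithinAt
  have B_det : ∀ p, (B p).det = p.1 := by
    intro p
    conv_rhs => rw [← one_mul p.1, ← cos_sq_add_sin_sq p.2]
    simp only [hB, neg_mul, LinearMap.det_toContinuousLinearMap, LinearMap.det_toLin,
      Matrix.det_fin_two_of, sub_neg_eq_add]
    ring
  have hinj : Set.InjOn polarCoord.symm polarCoord.target := by
    have := polarCoord.symm.injOn
    rwa [OpenPartialHomeomorph.symm_source] at this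
  calc ∫⁻ p, g p = ∫⁻ p in polarCoord.source, g p := by
        rw [← setLIntegral_univ]
        exact (setLIntegral_congr polarCoord_source_ae_eq_univ).symm
    _ = ∫⁻ p in polarCoord.symm '' polarCoord.target, g p := by
        rw [polarCoord.symm_image_target_eq_source]
    _ = ∫⁻ p in polarCoord.target, ENNReal.ofReal |(B p).det| * g (polarCoord.symm p) :=
        lintegral_image_eq_lintegral_abs_det_fderiv_mul volume
          polarCoord.open_target.measurableSet A hinj g
    _ = ∫⁻ p in polarCoord.target, ENNReal.ofReal p.1 * g (polarCoord.symm p) := by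
        refine setLIntegral_congr_fun polarCoord.open_target.measurableSet
          (fun x hx => ?_)
        rw [B_det, abs_of_pos hx.1]

lemma gauss2_eq_lintegral (S : Set (ℝ × ℝ)) (hS : MeasurableSet S) :
    (Measure.prod (gaussianReal 0 1) (gaussianReal 0 1)) S
      = ∫⁻ p : ℝ × ℝ, S.indicator
          (fun q => ENNReal.ofReal ((2 * π)⁻¹ * Real.exp (-(q.1 ^ 2 + q.2 ^ 2) / 2))) p := by
  have h2π : (0:ℝ) < 2 * π := by positivity
  have hφ : ∀ a b : ℝ, gaussianPDF 0 1 a * gaussianPDF 0 1 b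
      = ENNReal.ofReal ((2 * π)⁻¹ * Real.exp (-(a ^ 2 + b ^ 2) / 2)) := by
    intro a b
    rw [gaussianPDF, gaussianPDF, ← ENNReal.ofReal_mul (gaussianPDFReal_nonneg _ _ _)]
    congr 1
    simp only [gaussianPDFReal, NNReal.coe_one, mul_one, sub_zero]
    rw [show (2 * π)⁻¹ = (Real.sqrt (2 * π))⁻¹ * (Real.sqrt (2 * π))⁻¹ by
      rw [← mul_inv, Real.mul_self_sqrt h2π.le], mul_mul_mul_comm, ← Real.exp_add]
    congr 1
    ring
  set D : ℝ × ℝ → ℝ≥0∞ :=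
    fun q => ENNReal.ofReal ((2 * π)⁻¹ * Real.exp (-(q.1 ^ 2 + q.2 ^ 2) / 2)) with hD
  have hDmeas : Measurable D := by
    apply Measurable.ennreal_ofReal
    fun_prop
  have hγ : gaussianReal 0 1 = volume.withDensity (gaussianPDF 0 1) :=
    gaussianReal_of_var_ne_zero 0 one_ne_zero
  have hFmeas : Measurable (S.indicator D) := hDmeas.indicator hS
  rw [Measure.prod_apply hS]
  have step1 : ∀ x : ℝ, gaussianReal 0 1 (Prod.mk x ⁻¹' S)
      = ∫⁻ y, (Prod.mk x ⁻¹' S).indicator (fun y => gaussianPDF 0 1 y) y ∂volume := by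
    intro x
    rw [hγ, withDensity_apply _ (measurable_prodMk_left hS),
      lintegral_indicator (measurable_prodMk_left hS)]
  calc ∫⁻ x, gaussianReal 0 1 (Prod.mk x ⁻¹' S) ∂(gaussianReal 0 1)
      = ∫⁻ x, gaussianPDF 0 1 x * gaussianReal 0 1 (Prod.mk x ⁻¹' S) ∂volume := by
        rw [hγ, lintegral_withDensity_eq_lintegral_mul volume (measurable_gaussianPDF 0 1)
          (measurable_measure_prodMk_left hS)]
        rfl
    _ = ∫⁻ x, ∫⁻ y, S.indicator D (x, y) ∂volume ∂volume := by
        refine lintegral_congr fun x => ?_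
        rw [step1 x, ← lintegral_const_mul _ ((measurable_gaussianPDF 0 1).indicator
          (measurable_prodMk_left hS))]
        refine lintegral_congr fun y => ?_
        by_cases hxy : (x, y) ∈ S
        · simp only [Set.indicator_of_mem hxy, Set.indicator_of_mem (show y ∈ Prod.mk x ⁻¹' S
            from hxy), hD, hφ x y]
        · simp [Set.indicator_of_notMem hxy, Set.indicator_of_notMem
            (show y ∉ Prod.mk x ⁻¹' S from hxy)]
    _ = ∫⁻ p : ℝ × ℝ, S.indicator D p := by
        rw [Measure.volume_eq_prod, lintegral_prod _ hFmeas.aemeasurable]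

lemma radial_lintegral (u : ℝ) (hu : 0 ≤ u) :
    ∫⁻ r in Set.Ioi u, ENNReal.ofReal (r * ((2 * π)⁻¹ * Real.exp (-r ^ 2 / 2)))
      = ENNReal.ofReal ((2 * π)⁻¹ * Real.exp (-u ^ 2 / 2)) := by
  have h2π : (0:ℝ) < 2 * π := by positivity
  set g : ℝ → ℝ := fun r => -((2 * π)⁻¹ * Real.exp (-r ^ 2 / 2)) with hg
  set g' : ℝ → ℝ := fun r => r * ((2 * π)⁻¹ * Real.exp (-r ^ 2 / 2)) with hg'
  have hderiv : ∀ x ∈ Set.Ici u, HasDerivAt g (g' x) x := by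
    intro x _
    have h1 : HasDerivAt (fun r : ℝ => -r ^ 2 / 2) (-x) x := by
      have := ((hasDerivAt_pow 2 x).neg.div_const 2)
      exact this.congr_deriv (by norm_num; ring)
    have h2 := ((h1.exp).const_mul ((2 * π)⁻¹)).neg
    refine h2.congr_deriv ?_
    simp only [hg']
    ring
  have hpos : ∀ x ∈ Set.Ioi u, 0 ≤ g' x := by
    intro x hx
    have hx0 : (0:ℝ) ≤ x := hu.trans (le_of_lt hx)
    have := Real.exp_pos (-x ^ 2 / 2)
    positivity
  have htend : Filter.Tendsto g Filter.atTop (nhds 0) := by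
    have h1 : Filter.Tendsto (fun r : ℝ => -r ^ 2 / 2) Filter.atTop Filter.atBot := by
      apply Filter.Tendsto.atBot_div_const (by norm_num)
      exact Filter.tendsto_neg_atTop_atBot.comp (Filter.tendsto_pow_atTop two_ne_zero)
    have hexp : Filter.Tendsto (fun x : ℝ => Real.exp (-x ^ 2 / 2)) Filter.atTop (nhds 0) :=
      Real.tendsto_exp_atBot.comp h1
    have h3 := (hexp.const_mul ((2 * π)⁻¹)).neg
    simpa [hg] using h3
  have hint : IntegrableOn g' (Set.Ioi u) :=
    integrableOn_Ioi_deriv_of_nonneg' hderiv hpos htend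
  have hval : ∫ x in Set.Ioi u, g' x = (2 * π)⁻¹ * Real.exp (-u ^ 2 / 2) := by
    rw [integral_Ioi_of_hasDerivAt_of_nonneg' hderiv hpos htend]
    simp [hg]
  rw [← ofReal_integral_eq_lintegral_ofReal hint
    ((ae_restrict_iff' measurableSet_Ioi).2 (Filter.Eventually.of_forall hpos)), hval]

lemma cone_polar (C : Set (ℝ × ℝ)) (hC : MeasurableSet C)
    (hcone : ∀ (z : ℝ × ℝ) (r : ℝ), 0 < r → ((r * z.1, r * z.2) ∈ C ↔ z ∈ C))
    (u : ℝ) (hu : 0 ≤ u) :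
    (Measure.prod (gaussianReal 0 1) (gaussianReal 0 1))
        ({z : ℝ × ℝ | u ^ 2 < z.1 ^ 2 + z.2 ^ 2} ∩ C)
      = ENNReal.ofReal ((2 * π)⁻¹ * Real.exp (-u ^ 2 / 2)) *
          ∫⁻ θ in Set.Ioo (-π) π,
            ({θ : ℝ | ((Real.cos θ, Real.sin θ) : ℝ × ℝ) ∈ C}).indicator
              (fun _ => (1:ℝ≥0∞)) θ ∂volume := by
  set Θ : Set ℝ := {θ : ℝ | ((Real.cos θ, Real.sin θ) : ℝ × ℝ) ∈ C} with hΘdef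
  have hΘ : MeasurableSet Θ :=
    ((continuous_cos.prodMk continuous_sin).measurable) hC
  have hTail : MeasurableSet {z : ℝ × ℝ | u ^ 2 < z.1 ^ 2 + z.2 ^ 2} :=
    measurableSet_lt measurable_const (by fun_prop)
  have hS : MeasurableSet ({z : ℝ × ℝ | u ^ 2 < z.1 ^ 2 + z.2 ^ 2} ∩ C) := hTail.inter hC
  set D : ℝ × ℝ → ℝ≥0∞ :=
    fun q => ENNReal.ofReal ((2 * π)⁻¹ * Real.exp (-(q.1 ^ 2 + q.2 ^ 2) / 2)) with hD
  set f : ℝ → ℝ≥0∞ := (Set.Ioi u).indicator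
    (fun r => ENNReal.ofReal (r * ((2 * π)⁻¹ * Real.exp (-r ^ 2 / 2)))) with hf
  set g : ℝ → ℝ≥0∞ := Θ.indicator (fun _ => (1:ℝ≥0∞)) with hg
  have hfm : Measurable f := (by fun_prop : Measurable
    (fun r : ℝ => ENNReal.ofReal (r * ((2 * π)⁻¹ * Real.exp (-r ^ 2 / 2))))).indicator
    measurableSet_Ioi
  have hgm : Measurable g := measurable_const.indicator hΘ
  have key : ∀ q ∈ polarCoord.target,
      ENNReal.ofReal q.1 *
        (({z : ℝ × ℝ | u ^ 2 < z.1 ^ 2 + z.2 ^ 2} ∩ C).indicator D) (polarCoord.symm q)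
      = f q.1 * g q.2 := by
    rintro ⟨r, θ⟩ ⟨hr, hθ⟩
    simp only [Set.mem_Ioi] at hr
    have hsymm : polarCoord.symm (r, θ) = (r * Real.cos θ, r * Real.sin θ) := rfl
    have hnorm : (r * Real.cos θ) ^ 2 + (r * Real.sin θ) ^ 2 = r ^ 2 := by
      nlinarith [Real.sin_sq_add_cos_sq θ]
    have hmemC : ((r * Real.cos θ, r * Real.sin θ) : ℝ × ℝ) ∈ C ↔ θ ∈ Θ :=
      hcone (Real.cos θ, Real.sin θ) r hr
    have htail : ((r * Real.cos θ, r * Real.sin θ) : ℝ × ℝ)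
        ∈ {z : ℝ × ℝ | u ^ 2 < z.1 ^ 2 + z.2 ^ 2} ↔ u < r := by
      simp only [Set.mem_setOf_eq, hnorm]
      constructor <;> intro h <;> nlinarith
    rw [hsymm]
    by_cases hm : θ ∈ Θ
    · by_cases hru : u < r
      · rw [Set.indicator_of_mem (by exact ⟨htail.mpr hru, hmemC.mpr hm⟩),
          hg, Set.indicator_of_mem hm, hf, Set.indicator_of_mem (Set.mem_Ioi.mpr hru)]
        simp only [hD, hnorm]
        rw [← ENNReal.ofReal_mul hr.le, mul_one]
      · rw [Set.indicator_of_notMem (fun hmem => hru (htail.mp hmem.1)),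
          hf, Set.indicator_of_notMem (by simpa using hru)]
        simp
    · rw [Set.indicator_of_notMem (fun hmem => hm (hmemC.mp hmem.2)),
        hg, Set.indicator_of_notMem hm]
      simp
  rw [gauss2_eq_lintegral _ hS, lintegral_comp_polarCoord_symm',
    setLIntegral_congr_fun polarCoord.open_target.measurableSet
      key]
  have htarget : polarCoord.target = Set.Ioi (0:ℝ) ×ˢ Set.Ioo (-π) π := rfl
  rw [htarget, Measure.volume_eq_prod, ← Measure.prod_restrict,
    lintegral_prod_mul hfm.aemeasurable hgm.aemeasurable]
  congr 1
  rw [hf, lintegral_indicator measurableSet_Ioi, Measure.restrict_restrict measurableSet_Ioi,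
    Set.inter_eq_self_of_subset_left (Set.Ioi_subset_Ioi hu)]
  exact radial_lintegral u hu

lemma cone_tail (C : Set (ℝ × ℝ)) (hC : MeasurableSet C)
    (hcone : ∀ (z : ℝ × ℝ) (r : ℝ), 0 < r → ((r * z.1, r * z.2) ∈ C ↔ z ∈ C))
    (u : ℝ) (hu : 0 ≤ u) :
    (Measure.prod (gaussianReal 0 1) (gaussianReal 0 1))
        ({z : ℝ × ℝ | u ^ 2 < z.1 ^ 2 + z.2 ^ 2} ∩ C)
      = ENNReal.ofReal (Real.exp (-u ^ 2 / 2)) *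
          (Measure.prod (gaussianReal 0 1) (gaussianReal 0 1)) C := by
  have h2π : (0:ℝ) < 2 * π := by positivity
  have h0 : (Measure.prod (gaussianReal 0 1) (gaussianReal 0 1)) C
      = (Measure.prod (gaussianReal 0 1) (gaussianReal 0 1))
          ({z : ℝ × ℝ | (0:ℝ) ^ 2 < z.1 ^ 2 + z.2 ^ 2} ∩ C) := by
    have hzero : (Measure.prod (gaussianReal 0 1) (gaussianReal 0 1))
        {((0:ℝ), (0:ℝ))} = 0 := by
      rw [show ({((0:ℝ), (0:ℝ))} : Set (ℝ × ℝ)) = {(0:ℝ)} ×ˢ {(0:ℝ)} by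
        rw [Set.singleton_prod_singleton], Measure.prod_prod]
      have : gaussianReal 0 1 {(0:ℝ)} = 0 :=
        (gaussianReal_absolutelyContinuous 0 one_ne_zero) (measure_singleton 0)
      rw [this, zero_mul]
    apply le_antisymm
    · calc (Measure.prod (gaussianReal 0 1) (gaussianReal 0 1)) C
          ≤ (Measure.prod (gaussianReal 0 1) (gaussianReal 0 1))
            (({z : ℝ × ℝ | (0:ℝ) ^ 2 < z.1 ^ 2 + z.2 ^ 2} ∩ C) ∪ {((0:ℝ), (0:ℝ))}) := by
            apply measure_mono
            intro z hz
            by_cases hz0 : (0:ℝ) ^ 2 < z.1 ^ 2 + z.2 ^ 2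
            · exact Or.inl ⟨hz0, hz⟩
            · right
              push_neg at hz0
              norm_num at hz0
              have h1 : z.1 = 0 := by nlinarith [sq_nonneg z.1, sq_nonneg z.2]
              have h2 : z.2 = 0 := by nlinarith [sq_nonneg z.1, sq_nonneg z.2]
              simp [Set.mem_singleton_iff, Prod.ext_iff, h1, h2]
        _ ≤ _ + _ := measure_union_le _ _
        _ = _ := by rw [hzero, add_zero]
    · exact measure_mono Set.inter_subset_right
  rw [cone_polar C hC hcone u hu, h0, cone_polar C hC hcone 0 le_rfl]
  rw [ENNReal.ofReal_mul (by positivity), ENNReal.ofReal_mul (by positivity)]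
  norm_num
  ring

/-- For a centered bivariate normal pair `(X, Y)` with variances `σ_x², σ_y²` and
correlation `ρ ∈ (−1,1)` (realized via independent standard normals `Z₁, Z₂`), for every
`t > 0`: `Pr(|X| > t and |X| > |Y|) ≤ exp(−t²/(2σ_x²)) · Pr(|X| > |Y|)`, i.e. the
conditional tail probability `Pr(|X| > t | |X| > |Y|)` is at most `exp(−t²/(2σ_x²))`. -/
theorem bivariate_normal_conditional_tail (σx σy ρ t : ℝ)
    (hσx : 0 < σx) (hσy : 0 < σy) (hρ : ρ ∈ Set.Ioo (-1 : ℝ) 1) (ht : 0 < t) :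
    (Measure.prod (gaussianReal 0 1) (gaussianReal 0 1))
      ({z : ℝ × ℝ | t < |σx * z.1|}
        ∩ {z : ℝ × ℝ |
            |σy * (ρ * z.1 + Real.sqrt (1 - ρ ^ 2) * z.2)| < |σx * z.1|})
      ≤ ENNReal.ofReal (Real.exp (-(t ^ 2) / (2 * σx ^ 2)))
          * (Measure.prod (gaussianReal 0 1) (gaussianReal 0 1))
            {z : ℝ × ℝ |
              |σy * (ρ * z.1 + Real.sqrt (1 - ρ ^ 2) * z.2)| < |σx * z.1|} := by
  set C : Set (ℝ × ℝ) :=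
    {z : ℝ × ℝ | |σy * (ρ * z.1 + Real.sqrt (1 - ρ ^ 2) * z.2)| < |σx * z.1|} with hCdef
  have hC : MeasurableSet C := measurableSet_lt (by fun_prop) (by fun_prop)
  have hcone : ∀ (z : ℝ × ℝ) (r : ℝ), 0 < r → ((r * z.1, r * z.2) ∈ C ↔ z ∈ C) := by
    intro z r hr
    simp only [hCdef, Set.mem_setOf_eq]
    rw [show σy * (ρ * (r * z.1) + Real.sqrt (1 - ρ ^ 2) * (r * z.2))
        = r * (σy * (ρ * z.1 + Real.sqrt (1 - ρ ^ 2) * z.2)) by ring,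
      show σx * (r * z.1) = r * (σx * z.1) by ring,
      abs_mul r, abs_mul r, abs_of_pos hr]
    exact mul_lt_mul_iff_right₀ hr
  set u : ℝ := t / σx with hudef
  have hu : 0 < u := div_pos ht hσx
  have hsub : {z : ℝ × ℝ | t < |σx * z.1|} ∩ C
      ⊆ {z : ℝ × ℝ | u ^ 2 < z.1 ^ 2 + z.2 ^ 2} ∩ C := by
    apply Set.inter_subset_inter_left
    intro z hz
    simp only [Set.mem_setOf_eq] at hz ⊢
    rw [abs_mul, abs_of_pos hσx] at hz
    have h1 : u < |z.1| := (div_lt_iff₀ hσx).mpr (by linarith [hz]; )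
    nlinarith [sq_abs z.1, sq_nonneg z.2]
  have hexp : Real.exp (-u ^ 2 / 2) = Real.exp (-(t ^ 2) / (2 * σx ^ 2)) := by
    congr 1
    rw [hudef]
    field_simp
  calc (Measure.prod (gaussianReal 0 1) (gaussianReal 0 1))
        ({z : ℝ × ℝ | t < |σx * z.1|} ∩ C)
      ≤ (Measure.prod (gaussianReal 0 1) (gaussianReal 0 1))
          ({z : ℝ × ℝ | u ^ 2 < z.1 ^ 2 + z.2 ^ 2} ∩ C) := measure_mono hsub
    _ = ENNReal.ofReal (Real.exp (-u ^ 2 / 2)) *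
          (Measure.prod (gaussianReal 0 1) (gaussianReal 0 1)) C :=
        cone_tail C hC hcone u hu.le
    _ = _ := by rw [hexp]
end

section
/- Fix a positive integer k, ε > 0, β > 0, and a matrix W ∈ ℝ^{p×k} whose every column has at least one nonzero entry. Let u, u′ ∈ [−1,1]^p be β-adjacent and suppose that (Wᵀu)_j ≠ 0 and (Wᵀu′)_j ≠ 0 for all j = 1,…,k. For each j define L_j = ⌈ |(Wᵀu)_j| / (β·max_{1≤i≤p} |W_{ij}|) ⌉ and L′_j = ⌈ |(Wᵀu′)_j| / (β·max_{1≤i≤p} |W_{ij}|) ⌉. Let s̃ ∈ {−1,1}^k be generated by independently setting s̃_j = sign((Wᵀu)_j) with probability e^{L_j·ε/k}/(e^{L_j·ε/k}+1) and s̃_j = −sign((Wᵀu)_j) otherwise; let s̃′ be generated analogously from u′ using the L′_j. Then for every y ∈ {−1,1}^k, Pr(s̃ = y) ≤ e^ε · Pr(s̃′ = y). -/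
open MeasureTheory ProbabilityTheory Real

/-- Two vectors `u, u' ∈ ℝᵖ` are `β`-adjacent if they differ in exactly one
coordinate `i` and `|u i − u' i| ≤ β`. -/
def Adjacent {p : ℕ} (β : ℝ) (u u' : Fin p → ℝ) : Prop :=
  ∃ i₀ : Fin p, u i₀ ≠ u' i₀ ∧ |u i₀ - u' i₀| ≤ β ∧ ∀ i : Fin p, i ≠ i₀ → u i = u' i

/-- The sign function: `+1` for `t ≥ 0` and `−1` for `t < 0`. -/
noncomputable def psign (t : ℝ) : ℝ := if 0 ≤ t then 1 else -1

/-- The uniform distribution on `[0,1]`, used to drive the random sign flips. -/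
noncomputable def uniform01 : Measure ℝ := volume.restrict (Set.Icc (0 : ℝ) 1)

instance : IsProbabilityMeasure uniform01 :=
  ⟨by rw [uniform01, Measure.restrict_apply_univ, Real.volume_Icc]; norm_num⟩

/-- The smooth level `L_j = ⌈|(Wᵀu)_j| / (β·max_i |W i j|)⌉` for the `j`-th projection. -/
noncomputable def smoothLevel {p k : ℕ} (β : ℝ) (W : Fin p → Fin k → ℝ)
    (u : Fin p → ℝ) (j : Fin k) : ℤ :=
  ⌈|∑ i : Fin p, W i j * u i| / (β * ⨆ i : Fin p, |W i j|)⌉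

/-- The DP-SignRP-RR-smooth output: for each `j`, keep `sign((Wᵀu)_j)` with the smooth
flipping probability `e^{L_j ε/k}/(e^{L_j ε/k}+1)` and flip it otherwise, driven by the
uniform randomness `r j`. -/
noncomputable def signRPSmooth {p k : ℕ} (β ε : ℝ) (W : Fin p → Fin k → ℝ)
    (u : Fin p → ℝ) (r : Fin k → ℝ) (j : Fin k) : ℝ :=
  if r j ≤ Real.exp ((smoothLevel β W u j : ℝ) * ε / k)
        / (Real.exp ((smoothLevel β W u j : ℝ) * ε / k) + 1)
    then psign (∑ i : Fin p, W i j * u i)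
    else -psign (∑ i : Fin p, W i j * u i)

lemma uniform01_Iic {t : ℝ} (h0 : 0 ≤ t) (h1 : t ≤ 1) :
    uniform01 (Set.Iic t) = ENNReal.ofReal t := by
  rw [uniform01, Measure.restrict_apply measurableSet_Iic]
  have : Set.Iic t ∩ Set.Icc (0:ℝ) 1 = Set.Icc 0 t := by
    ext s; simp [Set.mem_Icc]
    constructor
    · rintro ⟨h, h2, _⟩; exact ⟨h2, h⟩
    · rintro ⟨h2, h⟩; exact ⟨h, h2, h.trans h1⟩
  rw [this, Real.volume_Icc, sub_zero]

lemma uniform01_Ioi {t : ℝ} (h0 : 0 ≤ t) (h1 : t ≤ 1) :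
    uniform01 (Set.Ioi t) = ENNReal.ofReal (1 - t) := by
  rw [uniform01, Measure.restrict_apply measurableSet_Ioi]
  have : Set.Ioi t ∩ Set.Icc (0:ℝ) 1 = Set.Ioc t 1 := by
    ext s; simp [Set.mem_Icc, Set.mem_Ioc]
    intro h h2
    exact h0.trans h.le
  rw [this, Real.volume_Ioc]

lemma ineq1 {e a a' : ℝ} (he : 1 ≤ e) (ha : 0 < a) (ha' : 0 < a') (h : a ≤ e * a') :
    a / (a + 1) ≤ e * (a' / (a' + 1)) := by
  rw [mul_div_assoc', div_le_div_iff₀ (by linarith) (by linarith)]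
  nlinarith [mul_pos ha ha']

lemma ineq2 {e a a' : ℝ} (he : 1 ≤ e) (ha : 0 < a) (ha' : 0 < a') (h : a' ≤ e * a) :
    1 / (a + 1) ≤ e * (1 / (a' + 1)) := by
  rw [mul_div_assoc', div_le_div_iff₀ (by linarith) (by linarith)]
  nlinarith

lemma one_sub_div' (a : ℝ) (ha : 0 < a) : 1 - a / (a + 1) = 1 / (a + 1) := by
  field_simp
  ring

lemma if_sign_eq {t r c yv : ℝ} (hc : c = 1 ∨ c = -1) (hyv : yv = 1 ∨ yv = -1) :
    ((if r ≤ t then c else -c) = yv) ↔ (if yv = c then r ≤ t else t < r) := by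
  have h2 : (-1 : ℝ) ≠ 1 := by norm_num
  have h3 : (1 : ℝ) ≠ -1 := by norm_num
  rcases hc with rfl|rfl <;> rcases hyv with rfl|rfl <;>
      by_cases h : r ≤ t <;>
    simp_all [not_le]

lemma psign_cases (t : ℝ) : psign t = 1 ∨ psign t = -1 := by
  unfold psign; split <;> simp

/-- **DP-SignRP-RR-smooth is `ε`-DP.** For a fixed matrix `W` whose columns are
nonzero, `β`-adjacent `u, u' ∈ [−1,1]ᵖ` with all projections nonzero, and every
`y ∈ {−1,1}ᵏ`, it holds that `Pr(s̃ = y) ≤ e^ε · Pr(s̃' = y)`, the probabilities being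
over the independent smooth random sign flips. -/
theorem dp_signrp_rr_smooth (p k : ℕ) (hp : 0 < p) (hk : 0 < k)
    (β ε : ℝ) (hβ : 0 < β) (hε : 0 < ε)
    (W : Fin p → Fin k → ℝ) (hW : ∀ j, ∃ i, W i j ≠ 0)
    (u u' : Fin p → ℝ)
    (hu : ∀ i, u i ∈ Set.Icc (-1 : ℝ) 1) (hu' : ∀ i, u' i ∈ Set.Icc (-1 : ℝ) 1)
    (hadj : Adjacent β u u')
    (hxu : ∀ j : Fin k, (∑ i : Fin p, W i j * u i) ≠ 0)
    (hxu' : ∀ j : Fin k, (∑ i : Fin p, W i j * u' i) ≠ 0)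
    (y : Fin k → ℝ) (hy : ∀ j, y j = 1 ∨ y j = -1) :
    (Measure.pi (fun _ : Fin k => uniform01))
        {r : Fin k → ℝ | ∀ j, signRPSmooth β ε W u r j = y j}
      ≤ ENNReal.ofReal (Real.exp ε)
          * (Measure.pi (fun _ : Fin k => uniform01))
              {r : Fin k → ℝ | ∀ j, signRPSmooth β ε W u' r j = y j} := by
  obtain ⟨i₀, hne0, hle0, heq0⟩ := hadj
  have hk0 : (0:ℝ) < k := Nat.cast_pos.mpr hk
  set x : Fin k → ℝ := fun j => ∑ i, W i j * u i with hxdef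
  set x' : Fin k → ℝ := fun j => ∑ i, W i j * u' i with hx'def
  set M : Fin k → ℝ := fun j => ⨆ i, |W i j| with hMdef
  have hMpos : ∀ j, 0 < M j := by
    intro j
    obtain ⟨i, hi⟩ := hW j
    have hb : BddAbove (Set.range fun i => |W i j|) := (Set.finite_range _).bddAbove
    exact lt_of_lt_of_le (abs_pos.mpr hi) (le_ciSup (f := fun i => |W i j|) hb i)
  have hβM : ∀ j, 0 < β * M j := fun j => mul_pos hβ (hMpos j)
  have hdiff : ∀ j, |x j - x' j| ≤ β * M j := by
    intro j
    have hxe : x j - x' j = W i₀ j * (u i₀ - u' i₀) := by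
      rw [hxdef, hx'def]
      simp only
      rw [← Finset.sum_sub_distrib, Finset.sum_eq_single i₀]
      · ring
      · intro b _ hb; rw [heq0 b hb]; ring
      · intro hb; exact absurd (Finset.mem_univ i₀) hb
    rw [hxe, abs_mul]
    have h1 : |W i₀ j| ≤ M j :=
      le_ciSup (f := fun i => |W i j|) ((Set.finite_range _).bddAbove) i₀
    calc |W i₀ j| * |u i₀ - u' i₀| ≤ M j * β :=
          mul_le_mul h1 hle0 (abs_nonneg _) (hMpos j).le
      _ = β * M j := mul_comm _ _
  -- levels
  set L : Fin k → ℤ := fun j => smoothLevel β W u j with hLdef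
  set L' : Fin k → ℤ := fun j => smoothLevel β W u' j with hL'def
  have hLe : ∀ j, L j = ⌈|x j| / (β * M j)⌉ := fun j => rfl
  have hL'e : ∀ j, L' j = ⌈|x' j| / (β * M j)⌉ := fun j => rfl
  have hL1 : ∀ j, 1 ≤ L j := by
    intro j
    rw [hLe]
    exact Int.ceil_pos.mpr (div_pos (abs_pos.mpr (hxu j)) (hβM j))
  have hL'1 : ∀ j, 1 ≤ L' j := by
    intro j
    rw [hL'e]
    exact Int.ceil_pos.mpr (div_pos (abs_pos.mpr (hxu' j)) (hβM j))
  have ceil_step : ∀ (a b : ℝ) (j : Fin k), |a - b| ≤ β * M j →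
      (⌈|a| / (β * M j)⌉ : ℤ) ≤ ⌈|b| / (β * M j)⌉ + 1 := by
    intro a b j hab
    have habs : |a| ≤ |b| + β * M j := by
      have h1 : |a| - |b| ≤ |a - b| := abs_sub_abs_le_abs_sub a b
      linarith
    have hdiv : |a| / (β * M j) ≤ |b| / (β * M j) + 1 := by
      rw [div_add' _ _ _ (hβM j).ne', div_le_div_iff₀ (hβM j) (hβM j)]
      nlinarith [hβM j]
    calc (⌈|a| / (β * M j)⌉ : ℤ) ≤ ⌈|b| / (β * M j) + 1⌉ := Int.ceil_le_ceil hdiv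
      _ = ⌈|b| / (β * M j)⌉ + 1 := by rw [Int.ceil_add_one]
  have hLle : ∀ j, L j ≤ L' j + 1 := by
    intro j; rw [hLe, hL'e]; exact ceil_step _ _ j (hdiff j)
  have hL'le : ∀ j, L' j ≤ L j + 1 := by
    intro j; rw [hLe, hL'e]
    exact ceil_step _ _ j (by rw [abs_sub_comm]; exact hdiff j)
  -- mixed sign case forces level 1
  have hmix : ∀ j, psign (x j) ≠ psign (x' j) → L j = 1 ∧ L' j = 1 := by
    intro j hne
    have hxj := hxu j
    have hxj' := hxu' j
    have hb : |x j| ≤ β * M j ∧ |x' j| ≤ β * M j := by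
      by_cases h1 : 0 ≤ x j <;> by_cases h2 : 0 ≤ x' j
      · exact absurd (by simp [psign, h1, h2] : psign (x j) = psign (x' j)) hne
      · have hd := hdiff j
        rw [abs_of_nonneg h1, abs_of_nonpos (le_of_not_ge h2),
          abs_of_nonneg (by linarith [le_of_not_ge h2] : (0:ℝ) ≤ x j - x' j)] at *
        constructor <;> linarith [le_of_not_ge h2]
      · have hd := hdiff j
        rw [abs_of_nonpos (le_of_not_ge h1), abs_of_nonneg h2,
          abs_of_nonpos (by linarith [le_of_not_ge h1] : x j - x' j ≤ (0:ℝ))] at *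
        constructor <;> linarith [le_of_not_ge h1]
      · exact absurd (by simp [psign, h1, h2] : psign (x j) = psign (x' j)) hne
    have hc1 : L j = 1 := by
      refine le_antisymm ?_ (hL1 j)
      rw [hLe]
      exact Int.ceil_le.mpr (by push_cast; exact (div_le_one (hβM j)).mpr hb.1)
    have hc2 : L' j = 1 := by
      refine le_antisymm ?_ (hL'1 j)
      rw [hL'e]
      exact Int.ceil_le.mpr (by push_cast; exact (div_le_one (hβM j)).mpr hb.2)
    exact ⟨hc1, hc2⟩
  -- probabilities
  set e : ℝ := Real.exp (ε / k) with hedef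
  have he1 : 1 ≤ e := Real.one_le_exp (by positivity)
  set a : Fin k → ℝ := fun j => Real.exp ((L j : ℝ) * ε / k) with hadef
  set a' : Fin k → ℝ := fun j => Real.exp ((L' j : ℝ) * ε / k) with ha'def
  have hapos : ∀ j, 0 < a j := fun j => Real.exp_pos _
  have ha'pos : ∀ j, 0 < a' j := fun j => Real.exp_pos _
  have hmulstep : ∀ (m n : ℤ), m ≤ n + 1 →
      Real.exp ((m : ℝ) * ε / k) ≤ e * Real.exp ((n : ℝ) * ε / k) := by
    intro m n hmn
    have : (m : ℝ) * ε / k ≤ (n : ℝ) * ε / k + ε / k := by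
      have hcast : (m : ℝ) ≤ (n : ℝ) + 1 := by exact_mod_cast hmn
      rw [← add_div, div_le_div_iff₀ hk0 hk0]
      nlinarith [mul_le_mul_of_nonneg_right (mul_le_mul_of_nonneg_right hcast hε.le) hk0.le]
    calc Real.exp ((m : ℝ) * ε / k) ≤ Real.exp ((n : ℝ) * ε / k + ε / k) :=
          Real.exp_le_exp.mpr this
      _ = e * Real.exp ((n : ℝ) * ε / k) := by rw [Real.exp_add, hedef]; ring
  have haa' : ∀ j, a j ≤ e * a' j := fun j => hmulstep _ _ (hLle j)
  have ha'a : ∀ j, a' j ≤ e * a j := fun j => hmulstep _ _ (hL'le j)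
  set t : Fin k → ℝ := fun j => a j / (a j + 1) with htdef
  set t' : Fin k → ℝ := fun j => a' j / (a' j + 1) with ht'def
  have ht01 : ∀ j, 0 ≤ t j ∧ t j ≤ 1 := fun j =>
    ⟨div_nonneg (hapos j).le (by linarith [hapos j]),
     (div_le_one (by linarith [hapos j])).mpr (by linarith)⟩
  have ht'01 : ∀ j, 0 ≤ t' j ∧ t' j ≤ 1 := fun j =>
    ⟨div_nonneg (ha'pos j).le (by linarith [ha'pos j]),
     (div_le_one (by linarith [ha'pos j])).mpr (by linarith)⟩
  set P : Fin k → ℝ := fun j => if y j = psign (x j) then t j else 1 - t j with hPdef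
  set P' : Fin k → ℝ := fun j => if y j = psign (x' j) then t' j else 1 - t' j with hP'def
  -- the key per-coordinate inequality
  have hkey : ∀ j, P j ≤ e * P' j := by
    intro j
    have haj1 : L j = 1 → a j = e := by
      intro h; rw [hadef]; simp only; rw [h]; push_cast; rw [one_mul, hedef]
    have ha'j1 : L' j = 1 → a' j = e := by
      intro h; rw [ha'def]; simp only; rw [h]; push_cast; rw [one_mul, hedef]
    rw [hPdef, hP'def]
    simp only
    by_cases h1 : y j = psign (x j)
    · by_cases h2 : y j = psign (x' j)
      · rw [if_pos h1, if_pos h2]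
        exact ineq1 he1 (hapos j) (ha'pos j) (haa' j)
      · rw [if_pos h1, if_neg h2]
        obtain ⟨hc1, hc2⟩ := hmix j (fun hh => h2 (h1.trans hh))
        rw [htdef, ht'def]; simp only
        rw [haj1 hc1, ha'j1 hc2, one_sub_div' e (by linarith), mul_one_div]
    · by_cases h2 : y j = psign (x' j)
      · rw [if_neg h1, if_pos h2]
        obtain ⟨hc1, hc2⟩ := hmix j (fun hh => h1 (h2.trans hh.symm))
        rw [htdef, ht'def]; simp only
        rw [haj1 hc1, ha'j1 hc2, one_sub_div' e (by linarith), mul_div_assoc',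
          div_le_div_iff₀ (by linarith) (by linarith)]
        nlinarith
      · rw [if_neg h1, if_neg h2]
        rw [htdef, ht'def]; simp only
        rw [one_sub_div' (a j) (hapos j), one_sub_div' (a' j) (ha'pos j)]
        exact ineq2 he1 (hapos j) (ha'pos j) (ha'a j)
  -- identify the events as product sets
  have hsetu : ∀ (v : Fin p → ℝ) (hv : ∀ j : Fin k, (∑ i : Fin p, W i j * v i) ≠ 0),
      {r : Fin k → ℝ | ∀ j, signRPSmooth β ε W v r j = y j} =
      Set.pi Set.univ (fun j =>
        if y j = psign (∑ i : Fin p, W i j * v i)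
        then Set.Iic (Real.exp ((smoothLevel β W v j : ℝ) * ε / k)
          / (Real.exp ((smoothLevel β W v j : ℝ) * ε / k) + 1))
        else Set.Ioi (Real.exp ((smoothLevel β W v j : ℝ) * ε / k)
          / (Real.exp ((smoothLevel β W v j : ℝ) * ε / k) + 1))) := by
    intro v hv
    ext r
    simp only [Set.mem_setOf_eq, Set.mem_univ_pi]
    refine forall_congr' fun j => ?_
    rw [signRPSmooth, if_sign_eq (psign_cases _) (hy j)]
    split_ifs with h
    · simp [Set.mem_Iic]
    · simp [Set.mem_Ioi]
  -- compute the measures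
  have hmeas : ∀ (v : Fin p → ℝ) (hv : ∀ j : Fin k, (∑ i : Fin p, W i j * v i) ≠ 0),
      (Measure.pi (fun _ : Fin k => uniform01))
        {r : Fin k → ℝ | ∀ j, signRPSmooth β ε W v r j = y j}
      = ∏ j : Fin k, ENNReal.ofReal
          (if y j = psign (∑ i : Fin p, W i j * v i)
           then Real.exp ((smoothLevel β W v j : ℝ) * ε / k)
             / (Real.exp ((smoothLevel β W v j : ℝ) * ε / k) + 1)
           else 1 - Real.exp ((smoothLevel β W v j : ℝ) * ε / k)
             / (Real.exp ((smoothLevel β W v j : ℝ) * ε / k) + 1)) := by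
    intro v hv
    rw [hsetu v hv, Measure.pi_pi]
    refine Finset.prod_congr rfl fun j _ => ?_
    have hep : 0 < Real.exp ((smoothLevel β W v j : ℝ) * ε / k) := Real.exp_pos _
    have h0 : 0 ≤ Real.exp ((smoothLevel β W v j : ℝ) * ε / k)
        / (Real.exp ((smoothLevel β W v j : ℝ) * ε / k) + 1) :=
      div_nonneg hep.le (by linarith)
    have h1 : Real.exp ((smoothLevel β W v j : ℝ) * ε / k)
        / (Real.exp ((smoothLevel β W v j : ℝ) * ε / k) + 1) ≤ 1 :=
      (div_le_one (by linarith)).mpr (by linarith)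
    split_ifs with h
    · exact uniform01_Iic h0 h1
    · exact uniform01_Ioi h0 h1
  have hmu : (Measure.pi (fun _ : Fin k => uniform01))
        {r : Fin k → ℝ | ∀ j, signRPSmooth β ε W u r j = y j}
      = ∏ j : Fin k, ENNReal.ofReal (P j) := hmeas u hxu
  have hmu' : (Measure.pi (fun _ : Fin k => uniform01))
        {r : Fin k → ℝ | ∀ j, signRPSmooth β ε W u' r j = y j}
      = ∏ j : Fin k, ENNReal.ofReal (P' j) := hmeas u' hxu'
  rw [hmu, hmu']
  have hP'nn : ∀ j, 0 ≤ P' j := by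
    intro j
    rw [hP'def]; simp only
    split_ifs
    · exact (ht'01 j).1
    · linarith [(ht'01 j).2]
  calc ∏ j : Fin k, ENNReal.ofReal (P j)
      ≤ ∏ j : Fin k, (ENNReal.ofReal e * ENNReal.ofReal (P' j)) := by
        refine Finset.prod_le_prod' fun j _ => ?_
        rw [← ENNReal.ofReal_mul (by positivity : (0:ℝ) ≤ e)]
        exact ENNReal.ofReal_le_ofReal (hkey j)
    _ = ENNReal.ofReal e ^ k * ∏ j : Fin k, ENNReal.ofReal (P' j) := by
        rw [Finset.prod_mul_distrib, Finset.prod_const, Finset.card_univ, Fintype.card_fin]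
    _ = ENNReal.ofReal (Real.exp ε) * ∏ j : Fin k, ENNReal.ofReal (P' j) := by
        congr 1
        rw [← ENNReal.ofReal_pow (by positivity), hedef, ← Real.exp_nat_mul]
        congr 1
        field_simp
end
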